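/- arXiv:1704.01050 — 5 statements merged into one kernel-verified Lean document; each statement's English description precedes it below -/
import Mathlib

section
/- Let A_1, …, A_n (n ≥ 2) be admissible full triangulated subcategories of a triangulated category T forming a semiorthogonal sequence. Then the generated subcategory ⟨A_1, …, A_n⟩ is admissible, and there is a natural isomorphism of functors L_{⟨A_1, …, A_n⟩} ≅ L_{A_1} ∘ L_{A_2} ∘ … ∘ L_{A_n} : T → T. -/
set_option linter.unusedSectionVars false
set_option linter.unusedVariables false
set_option maxHeartbeats 1000000


namespace HPD

open CategoryTheory Category Limits Pretriangulated

universe w v u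

variable {C : Type u} [Category.{v} C]

/-- The "essential image" of a set of objects under an assignment `Φ` on objects. -/
def essImageSet (Φ : C → C) (S : Set C) : Set C :=
  {Y : C | ∃ X ∈ S, Nonempty (Φ X ≅ Y)}

/-- The image of a set of objects under a functor to a full subcategory, regarded as a
set of objects of the ambient category (closed under isomorphism). -/
def projImageSet {Z : C → Prop} (π : C ⥤ ObjectProperty.FullSubcategory Z) (S : Set C) : Set C :=
  essImageSet (fun X : C => (π.obj X).obj) S

section Preadd

variable [Preadditive C]

/-- `HomOrth B A` : every morphism from an object of `B` to an object of `A` vanishes. -/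
def HomOrth (B A : Set C) : Prop :=
  ∀ ⦃X : C⦄, X ∈ B → ∀ ⦃Y : C⦄, Y ∈ A → ∀ f : X ⟶ Y, f = 0

/-- The right orthogonal `A^⊥` of a set of objects `A`. -/
def rightOrth (A : Set C) : Set C :=
  {Y : C | ∀ ⦃X : C⦄, X ∈ A → ∀ f : X ⟶ Y, f = 0}

/-- The left orthogonal `^⊥A` of a set of objects `A`. -/
def leftOrth (A : Set C) : Set C :=
  {X : C | ∀ ⦃Y : C⦄, Y ∈ A → ∀ f : X ⟶ Y, f = 0}

/-- A subcategory (set of objects) is admissible if the inclusion of the corresponding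
full subcategory admits both a left and a right adjoint. -/
def IsAdmissibleSub (A : Set C) : Prop :=
  (ObjectProperty.ι (· ∈ A)).IsRightAdjoint ∧
    (ObjectProperty.ι (· ∈ A)).IsLeftAdjoint

/-- `L : C ⥤ C` is a left mutation functor through `B`, i.e. it is (isomorphic to)
the composition `i_{B^⊥} ∘ i_{B^⊥}^*` of the left adjoint of the inclusion of the right
orthogonal of `B` with this inclusion. -/
def IsLeftMutation (B : Set C) (L : C ⥤ C) : Prop :=
  ∃ p : C ⥤ ObjectProperty.FullSubcategory (· ∈ rightOrth B),
    Nonempty (p ⊣ ObjectProperty.ι (· ∈ rightOrth B)) ∧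
      Nonempty (L ≅ p ⋙ ObjectProperty.ι (· ∈ rightOrth B))

end Preadd

section Triang

variable [HasZeroObject C] [Preadditive C] [HasShift C ℤ]
  [∀ n : ℤ, (shiftFunctor C n).Additive] [Pretriangulated C]

/-- A full triangulated subcategory, recorded as its (isomorphism-closed) set of objects. -/
structure IsTriangSub (A : Set C) : Prop where
  zero_mem : ∀ ⦃Z : C⦄, IsZero Z → Z ∈ A
  iso_mem : ∀ ⦃X Y : C⦄, (X ≅ Y) → X ∈ A → Y ∈ A
  shift_mem : ∀ ⦃X : C⦄ (n : ℤ), X ∈ A → (X⟦n⟧ : C) ∈ A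
  cone_mem : ∀ T : Triangle C, (T ∈ distTriang C) → T.obj₁ ∈ A → T.obj₂ ∈ A → T.obj₃ ∈ A

/-- A full triangulated subcategory is admissible if it moreover has the two adjoints. -/
def IsAdmissible (A : Set C) : Prop :=
  IsTriangSub A ∧ IsAdmissibleSub A

/-- The smallest full triangulated subcategory containing a given set of objects. -/
def generated (S : Set C) : Set C :=
  ⋂₀ {P : Set C | IsTriangSub P ∧ S ⊆ P}

/-- A semiorthogonal sequence of subcategories: no nonzero morphisms from later to
earlier ones. -/
def Semiorthogonal {n : ℕ} (A : Fin n → Set C) : Prop :=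
  ∀ ⦃l k : Fin n⦄, l < k → HomOrth (A k) (A l)

/-- `t` admits a filtration `0 = t_n → t_{n-1} → ⋯ → t_0 = t` whose successive cones lie
in the prescribed subcategories. -/
def HasFiltration {n : ℕ} (A : Fin n → Set C) (t : C) : Prop :=
  ∃ (F : Fin (n + 1) → C) (f : ∀ j : Fin n, F j.succ ⟶ F j.castSucc),
    IsZero (F (Fin.last n)) ∧ F 0 = t ∧
      ∀ j : Fin n, ∃ (a : C) (g : F j.castSucc ⟶ a) (h : a ⟶ (F j.succ)⟦(1 : ℤ)⟧),
        (Triangle.mk (f j) g h ∈ distTriang C) ∧ a ∈ A j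

/-- A semiorthogonal decomposition of (the bounded derived category) `C`. -/
structure IsSOD {n : ℕ} (A : Fin n → Set C) : Prop where
  triangSub : ∀ j, IsTriangSub (A j)
  semiorth : Semiorthogonal A
  filt : ∀ t : C, HasFiltration A t

/-- A semiorthogonal decomposition of a full triangulated subcategory `D` of `C`. -/
structure IsSODWithin (D : Set C) {n : ℕ} (A : Fin n → Set C) : Prop where
  subset : ∀ j, A j ⊆ D
  triangSub : ∀ j, IsTriangSub (A j)
  semiorth : Semiorthogonal A
  filt : ∀ t ∈ D, HasFiltration A t

/-- The `n`-th power of an autoequivalence, applied to an object. -/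
def twistFun (τ : C ≌ C) : ℤ → C → C
  | Int.ofNat m => (fun X : C => τ.functor.obj X)^[m]
  | Int.negSucc m => (fun X : C => τ.inverse.obj X)^[m + 1]

/-- The twist `S(n) = τⁿ(S)` of a set of objects (as an essential image). -/
def twistSet (τ : C ≌ C) (n : ℤ) (S : Set C) : Set C :=
  essImageSet (twistFun τ n) S

/-- A Lefschetz decomposition of `C` of length `i` with respect to the autoequivalence `τ`:
`C = ⟨A 0, (A 1)(1), …, (A (i-1))(i-1)⟩` with `A 0 ⊇ A 1 ⊇ ⋯ ⊇ A (i-1)` admissible. -/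
structure IsLefschetz (τ : C ≌ C) (i : ℕ) (A : ℕ → Set C) : Prop where
  pos : 0 < i
  desc : ∀ m : ℕ, m + 1 < i → A (m + 1) ⊆ A m
  adm : ∀ m : ℕ, m < i → IsAdmissible (A m)
  sod : IsSOD (fun j : Fin i => twistSet τ ((j : ℕ) : ℤ) (A (j : ℕ)))

/-- The primitive component `𝔞_k`, the right orthogonal of `A (k+1)` inside `A k`. -/
def primComp (A : ℕ → Set C) (m : ℕ) : Set C :=
  A m ∩ rightOrth (A (m + 1))

/-- Composition of a finite family of endofunctors: `compFam L = L 0 ∘ L 1 ∘ ⋯ ∘ L (m-1)`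
(so `L (m-1)` is applied first). -/
def compFam : ∀ {m : ℕ}, (Fin m → (C ⥤ C)) → (C ⥤ C)
  | 0, _ => 𝟭 C
  | _ + 1, L => compFam (fun j => L j.succ) ⋙ L 0

end Triang

section Serre

/-- A Serre functor on the `k`-linear triangulated category `C`: a `k`-linear exact
autoequivalence `S` together with pairings exhibiting `Hom(X, Y) ≅ Hom(Y, S X)^*`
naturally in both variables. -/
structure SerreData (k : Type w) [Field k] (C : Type u) [Category.{v} C] [Preadditive C]
    [CategoryTheory.Linear k C] [HasZeroObject C] [HasShift C ℤ]
    [∀ n : ℤ, (shiftFunctor C n).Additive] [Pretriangulated C] where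
  S : C ≌ C
  additive : S.functor.Additive
  linear : letI := additive; S.functor.Linear k
  commShift : S.functor.CommShift ℤ
  triangulated : letI := commShift; S.functor.IsTriangulated
  pairing : ∀ X Y : C, (X ⟶ Y) →ₗ[k] Module.Dual k (Y ⟶ S.functor.obj X)
  pairing_bijective : ∀ X Y : C, Function.Bijective (pairing X Y)
  pairing_nat_left : ∀ ⦃X' X Y : C⦄ (a : X' ⟶ X) (φ : X ⟶ Y) (ψ : Y ⟶ S.functor.obj X'),
    pairing X' Y (a ≫ φ) ψ = pairing X Y φ (ψ ≫ S.functor.map a)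
  pairing_nat_right : ∀ ⦃X Y Y' : C⦄ (b : Y ⟶ Y') (φ : X ⟶ Y) (ψ : Y' ⟶ S.functor.obj X),
    pairing X Y' (φ ≫ b) ψ = pairing X Y φ (b ≫ ψ)

end Serre


section Statements

variable [HasZeroObject C] [Preadditive C] [HasShift C ℤ]
  [∀ n : ℤ, (shiftFunctor C n).Additive] [Pretriangulated C]

/-! ### Utilities -/

/-- Morphisms in a full subcategory are morphisms of the ambient category. -/
def fsHomEquiv {P : ObjectProperty C} (X Y : P.FullSubcategory) :
    (X ⟶ Y) ≃ (X.obj ⟶ Y.obj) :=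
  ⟨fun f => f.hom, fun f => ObjectProperty.homMk f, fun _ => rfl, fun _ => rfl⟩

def ShiftClosed (S : Set C) : Prop := ∀ ⦃X : C⦄, X ∈ S → ∀ n : ℤ, (X⟦n⟧ : C) ∈ S

lemma IsTriangSub.shiftClosed {A : Set C} (hA : IsTriangSub A) : ShiftClosed A :=
  fun _ hX n => hA.shift_mem n hX

lemma shift_eq_zero_iff {X Y : C} (n : ℤ) (f : X ⟶ Y) :
    (shiftFunctor C n).map f = 0 ↔ f = 0 :=
  ⟨fun h => (shiftFunctor C n).map_injective (by rw [h, Functor.map_zero]),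
   fun h => by rw [h, Functor.map_zero]⟩

lemma isZero_shift {X : C} (hX : IsZero X) (n : ℤ) : IsZero ((X⟦n⟧ : C)) := by
  rw [IsZero.iff_id_eq_zero] at hX ⊢
  have h2 : (shiftFunctor C n).map (𝟙 X) = 0 := by rw [hX, Functor.map_zero]
  rw [CategoryTheory.Functor.map_id] at h2
  exact h2

/-- The shifting adjunction `shift n ⊣ shift (-n)`. -/
noncomputable abbrev shAdj (n : ℤ) : shiftFunctor C n ⊣ shiftFunctor C (-n) :=
  (shiftEquiv C n).toAdjunction

/-- The shifting adjunction `shift (-n) ⊣ shift n`. -/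
noncomputable abbrev shAdj' (n : ℤ) : shiftFunctor C (-n) ⊣ shiftFunctor C n :=
  (shiftEquiv' C (-n) n (neg_add_cancel n)).toAdjunction

lemma rightOrth_shiftClosed {A : Set C} (hA : ShiftClosed A) :
    ShiftClosed (rightOrth A) := by
  intro Y hY n X hX f
  have h0 : ((shAdj' n).homEquiv X Y).symm f = 0 := hY (hA hX (-n)) _
  have : f = (shAdj' n).homEquiv X Y (((shAdj' n).homEquiv X Y).symm f) :=
    (Equiv.apply_symm_apply _ _).symm
  rw [this, h0, Adjunction.homEquiv_unit, Functor.map_zero, comp_zero]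

lemma leftOrth_shiftClosed {A : Set C} (hA : ShiftClosed A) :
    ShiftClosed (leftOrth A) := by
  intro X hX n Y hY f
  have h0 : (shAdj n).homEquiv X Y f = 0 := hX (hA hY (-n)) _
  have : f = ((shAdj n).homEquiv X Y).symm ((shAdj n).homEquiv X Y f) :=
    (Equiv.symm_apply_apply _ _).symm
  rw [this, h0, Adjunction.homEquiv_counit, Functor.map_zero, zero_comp]

lemma rightOrth_isoClosed {A : Set C} {Y Y' : C} (e : Y ≅ Y') (hY : Y ∈ rightOrth A) :
    Y' ∈ rightOrth A := by
  intro X hX f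
  have : f ≫ e.inv = 0 := hY hX _
  rw [← comp_id f, ← e.inv_hom_id, ← assoc, this, zero_comp]

lemma rightOrth_antitone {A B : Set C} (h : A ⊆ B) : rightOrth B ⊆ rightOrth A :=
  fun _ hY _ hX f => hY (h hX) f

lemma cancel_zero_iso_left {X' X Y : C} (f : X ⟶ Y) (e : X' ≅ X) (h : e.hom ≫ f = 0) :
    f = 0 := by
  rw [← id_comp f, ← e.inv_hom_id, assoc, h, comp_zero]

lemma cancel_zero_iso_right {X Y Y' : C} (f : X ⟶ Y) (e : Y' ≅ Y) (h : f ≫ e.inv = 0) :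
    f = 0 := by
  rw [← comp_id f, ← e.inv_hom_id, ← assoc, h, zero_comp]

/-! ### Hom exactness gadgets -/

lemma bij_hom_of_triangle (T : Triangle C) (hT : T ∈ distTriang C) {Z : C}
    (h1 : ∀ f : T.obj₁ ⟶ Z, f = 0) (h1' : ∀ f : (T.obj₁⟦(1 : ℤ)⟧ : C) ⟶ Z, f = 0) :
    Function.Bijective (fun ψ : T.obj₃ ⟶ Z => T.mor₂ ≫ ψ) := by
  constructor
  · intro φ φ' h
    dsimp only at h
    have h0 : T.mor₂ ≫ (φ - φ') = 0 := by
      simp only [Preadditive.comp_sub]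
      rw [h, sub_self]
    obtain ⟨g, hg⟩ := Triangle.yoneda_exact₃ _ hT _ h0
    rw [← sub_eq_zero, hg, h1' g, comp_zero]
  · intro ψ
    obtain ⟨g, hg⟩ := Triangle.yoneda_exact₂ _ hT ψ (by rw [h1 (T.mor₁ ≫ ψ)])
    exact ⟨g, hg.symm⟩

lemma bij_hom_of_triangle' (T : Triangle C) (hT : T ∈ distTriang C) {W : C}
    (h3 : ∀ f : W ⟶ T.obj₃, f = 0) (h3' : ∀ f : W ⟶ (T.obj₃⟦(-1 : ℤ)⟧ : C), f = 0) :
    Function.Bijective (fun ψ : W ⟶ T.obj₁ => ψ ≫ T.mor₁) := by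
  constructor
  · intro φ φ' h
    dsimp only at h
    have h0 : (φ - φ') ≫ T.invRotate.mor₂ = 0 := by
      change (φ - φ') ≫ T.mor₁ = 0
      rw [Preadditive.sub_comp]
      change φ ≫ T.mor₁ - φ' ≫ T.mor₁ = 0
      rw [h, sub_self]
    obtain ⟨g, hg⟩ := Triangle.coyoneda_exact₂ _ (inv_rot_of_distTriang T hT) _ h0
    rw [← sub_eq_zero, hg, h3' g]
    exact zero_comp
  · intro ψ
    obtain ⟨g, hg⟩ :=
      Triangle.coyoneda_exact₂ _ hT ψ (by rw [h3 (ψ ≫ T.mor₂)])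
    exact ⟨g, hg.symm⟩

/-! ### Shifting bijectivity of (pre/post)-composition -/

lemma bij_precomp_shift {X Y : C} (u : X ⟶ Y) {S : Set C} (hS : ShiftClosed S)
    (h : ∀ Z ∈ S, Function.Bijective (fun ψ : Y ⟶ Z => u ≫ ψ)) (n : ℤ) :
    ∀ Z ∈ S, Function.Bijective
      (fun ψ : (Y⟦n⟧ : C) ⟶ Z => (shiftFunctor C n).map u ≫ ψ) := by
  intro Z hZ
  have key : ∀ ψ : (Y⟦n⟧ : C) ⟶ Z,
      (shiftFunctor C n).map u ≫ ψ =
        ((shAdj n).homEquiv X Z).symm (u ≫ (shAdj n).homEquiv Y Z ψ) := by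
    intro ψ
    rw [← Adjunction.homEquiv_naturality_left, Equiv.symm_apply_apply]
  have : (fun ψ : (Y⟦n⟧ : C) ⟶ Z => (shiftFunctor C n).map u ≫ ψ) =
      (((shAdj n).homEquiv X Z).symm ∘ (fun χ : Y ⟶ (Z⟦-n⟧ : C) => u ≫ χ)) ∘
        ((shAdj n).homEquiv Y Z) := funext key
  rw [this]
  exact ((((shAdj n).homEquiv X Z).symm.bijective.comp
    (h _ (hS hZ (-n)))).comp ((shAdj n).homEquiv Y Z).bijective)

lemma bij_postcomp_shift {X Y : C} (u : Y ⟶ X) {S : Set C} (hS : ShiftClosed S)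
    (h : ∀ W ∈ S, Function.Bijective (fun ψ : W ⟶ Y => ψ ≫ u)) (n : ℤ) :
    ∀ W ∈ S, Function.Bijective
      (fun ψ : W ⟶ (Y⟦n⟧ : C) => ψ ≫ (shiftFunctor C n).map u) := by
  intro W hW
  have key : ∀ ψ : W ⟶ (Y⟦n⟧ : C),
      ψ ≫ (shiftFunctor C n).map u =
        (shAdj' n).homEquiv W X (((shAdj' n).homEquiv W Y).symm ψ ≫ u) := by
    intro ψ
    rw [Adjunction.homEquiv_naturality_right, Equiv.apply_symm_apply]
  have : (fun ψ : W ⟶ (Y⟦n⟧ : C) => ψ ≫ (shiftFunctor C n).map u) =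
      (((shAdj' n).homEquiv W X) ∘ (fun χ : (W⟦-n⟧ : C) ⟶ Y => χ ≫ u)) ∘
        ((shAdj' n).homEquiv W Y).symm := funext key
  rw [this]
  exact ((((shAdj' n).homEquiv W X).bijective.comp
    (h _ (hS hW (-n)))).comp ((shAdj' n).homEquiv W Y).symm.bijective)

/-! ### Orthogonality of the "cone" pieces -/

lemma first_obj_orth (T : Triangle C) (hT : T ∈ distTriang C) {S : Set C}
    (hS : ShiftClosed S)
    (h : ∀ Z ∈ S, Function.Bijective (fun ψ : T.obj₃ ⟶ Z => T.mor₂ ≫ ψ)) :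
    ∀ Z ∈ S, ∀ φ : T.obj₁ ⟶ Z, φ = 0 := by
  intro Z hZ φ
  have h1 : T.invRotate.mor₁ ≫ φ = 0 := by
    have hinj := (bij_precomp_shift T.mor₂ hS h (-1) Z hZ).1
    have hv : (shiftFunctor C (-1)).map T.mor₃ ≫
        ((shiftEquiv C (1 : ℤ)).unitIso.inv.app T.obj₁ ≫ φ) = 0 := by
      apply hinj
      dsimp only
      rw [comp_zero, ← assoc, ← Functor.map_comp, comp_distTriang_mor_zero₂₃ T hT,
        Functor.map_zero, zero_comp]
    show (-(shiftFunctor C (-1)).map T.mor₃ ≫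
      (shiftEquiv C (1 : ℤ)).unitIso.inv.app T.obj₁) ≫ φ = 0
    rw [Preadditive.neg_comp, neg_eq_zero]
    exact (Category.assoc _ _ _).trans hv
  obtain ⟨g, hg⟩ := Triangle.yoneda_exact₂ _ (inv_rot_of_distTriang T hT) φ h1
  obtain ⟨ψ, hψ⟩ := (h Z hZ).2 g
  dsimp only at hψ
  have : T.invRotate.mor₂ ≫ g = T.mor₁ ≫ T.mor₂ ≫ ψ := by
    rw [← hψ]; rfl
  rw [hg, this, ← assoc, comp_distTriang_mor_zero₁₂ T hT, zero_comp]

lemma third_obj_orth (T : Triangle C) (hT : T ∈ distTriang C) {S : Set C}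
    (hS : ShiftClosed S)
    (h : ∀ W ∈ S, Function.Bijective (fun ψ : W ⟶ T.obj₁ => ψ ≫ T.mor₁)) :
    ∀ W ∈ S, ∀ φ : W ⟶ T.obj₃, φ = 0 := by
  intro W hW φ
  have h1 : φ ≫ T.rotate.mor₂ = 0 := by
    have hinj := (bij_postcomp_shift T.mor₁ hS h 1 W hW).1
    have hv : φ ≫ T.mor₃ = 0 := by
      apply hinj
      dsimp only
      rw [zero_comp, assoc, comp_distTriang_mor_zero₃₁ T hT, comp_zero]
    show φ ≫ T.mor₃ = 0
    exact hv
  obtain ⟨g, hg⟩ := Triangle.coyoneda_exact₂ _ (rot_of_distTriang T hT) φ h1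
  obtain ⟨ψ, hψ⟩ := (h W hW).2 g
  dsimp only at hψ
  have : g ≫ T.rotate.mor₁ = (ψ ≫ T.mor₁) ≫ T.mor₂ := by
    rw [hψ]; rfl
  rw [hg, this, assoc, comp_distTriang_mor_zero₁₂ T hT, comp_zero]

/-! ### Generated triangulated subcategory -/

lemma generated_isTriangSub (S : Set C) : IsTriangSub (generated S) := by
  constructor
  · intro Z hZ
    exact Set.mem_sInter.2 fun P hP => hP.1.zero_mem hZ
  · intro X Y e hX
    exact Set.mem_sInter.2 fun P hP => hP.1.iso_mem e (Set.mem_sInter.1 hX P hP)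
  · intro X n hX
    exact Set.mem_sInter.2 fun P hP => hP.1.shift_mem n (Set.mem_sInter.1 hX P hP)
  · intro T hT h1 h2
    exact Set.mem_sInter.2 fun P hP =>
      hP.1.cone_mem T hT (Set.mem_sInter.1 h1 P hP) (Set.mem_sInter.1 h2 P hP)

lemma subset_generated (S : Set C) : S ⊆ generated S :=
  fun _ hX => Set.mem_sInter.2 fun _ hP => hP.2 hX

lemma generated_subset {S P : Set C} (hP : IsTriangSub P) (h : S ⊆ P) :
    generated S ⊆ P :=
  Set.sInter_subset_of_mem (Set.mem_setOf.2 ⟨hP, h⟩)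

/-! ### Transfer of orthogonality to the generated subcategory -/

/-- If `Z` is right-orthogonal to each `A j` then it is right-orthogonal to the
generated subcategory. -/
lemma mem_rightOrth_generated {n : ℕ} (A : Fin n → Set C)
    (hsub : ∀ j, IsTriangSub (A j)) {Z : C} (hZ : ∀ j, Z ∈ rightOrth (A j)) :
    Z ∈ rightOrth (generated (⋃ j, A j)) := by
  set P : Set C := {X : C | ∀ m : ℤ, ∀ f : (X⟦m⟧ : C) ⟶ Z, f = 0} with hPdef
  have hP : IsTriangSub P := by
    constructor
    · intro W hW m f
      exact (isZero_shift hW m).eq_of_src f 0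
    · intro X Y e hX m f
      exact cancel_zero_iso_left f ((shiftFunctor C m).mapIso e) (hX m _)
    · intro X k hX m f
      exact cancel_zero_iso_left f ((shiftFunctorAdd' C k m (k + m) rfl).app X) (hX (k + m) _)
    · intro T hT h1 h2 m f
      have hTm := Triangle.shift_distinguished T hT m
      set Tm := (CategoryTheory.shiftFunctor (Triangle C) m).obj T with hTmdef
      have hmor : Tm.mor₂ ≫ f = 0 := h2 m _
      obtain ⟨g, hg⟩ := Triangle.yoneda_exact₃ _ hTm f hmor
      have hgz : g = 0 :=
        cancel_zero_iso_left g ((shiftFunctorAdd' C m 1 (m + 1) rfl).app T.obj₁)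
          (h1 (m + 1) _)
      rw [hg, hgz, comp_zero]
      rfl
  have hsubP : (⋃ j, A j) ⊆ P := by
    intro a ha
    obtain ⟨j, hj⟩ := Set.mem_iUnion.1 ha
    intro m f
    exact hZ j (hsub j |>.shift_mem m hj) f
  intro X hX f
  have hXP : X ∈ P := generated_subset hP hsubP hX
  exact cancel_zero_iso_left f ((shiftFunctorZero C ℤ).app X)
    (hXP 0 ((shiftFunctorZero C ℤ).hom.app X ≫ f))

/-- If `W` is left-orthogonal to each `A j` then it is left-orthogonal to the
generated subcategory. -/
lemma mem_leftOrth_generated {n : ℕ} (A : Fin n → Set C)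
    (hsub : ∀ j, IsTriangSub (A j)) {W : C} (hW : ∀ j, W ∈ leftOrth (A j)) :
    ∀ d ∈ generated (⋃ j, A j), ∀ f : W ⟶ d, f = 0 := by
  set P : Set C := {d : C | ∀ m : ℤ, ∀ f : W ⟶ (d⟦m⟧ : C), f = 0} with hPdef
  have hP : IsTriangSub P := by
    constructor
    · intro Z hZ m f
      exact (isZero_shift hZ m).eq_of_tgt f 0
    · intro X Y e hX m f
      exact cancel_zero_iso_right f ((shiftFunctor C m).mapIso e) (hX m _)
    · intro X k hX m f
      exact cancel_zero_iso_right f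
        ((shiftFunctorAdd' C k m (k + m) rfl).app X)
        (hX (k + m) _)
    · intro T hT h1 h2 m f
      have hTm := Triangle.shift_distinguished T hT m
      set Tm := (CategoryTheory.shiftFunctor (Triangle C) m).obj T with hTmdef
      have hmor : f ≫ Tm.mor₃ = 0 :=
        cancel_zero_iso_right (f ≫ Tm.mor₃)
          ((shiftFunctorAdd' C m 1 (m + 1) rfl).app T.obj₁)
          (h1 (m + 1) _)
      obtain ⟨g, hg⟩ := Triangle.coyoneda_exact₃ _ hTm f hmor
      have hgz : g = 0 := h2 m g
      rw [hg, hgz, zero_comp]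
      rfl
  have hsubP : (⋃ j, A j) ⊆ P := by
    intro a ha
    obtain ⟨j, hj⟩ := Set.mem_iUnion.1 ha
    intro m f
    exact hW j (hsub j |>.shift_mem m hj) f
  intro d hd f
  have hdP : d ∈ P := generated_subset hP hsubP hd
  exact cancel_zero_iso_right f ((shiftFunctorZero C ℤ).app d) (hdP 0 _)

/-! ### Reflections from adjunctions -/

/-- From a right adjoint of the inclusion of `A`, construct for every `X` a distinguished
triangle `a ⟶ X ⟶ Y ⟶ a⟦1⟧` with `a ∈ A` and `Y ∈ A^⊥`. -/
lemma exists_refl (A : Set C) (hA : IsTriangSub A)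
    (hadj : (ObjectProperty.ι (· ∈ A)).IsLeftAdjoint) (X : C) :
    ∃ (a Y : C) (f : a ⟶ X) (g : X ⟶ Y) (h : Y ⟶ (a⟦(1 : ℤ)⟧ : C)),
      (Triangle.mk f g h ∈ distTriang C) ∧ a ∈ A ∧ Y ∈ rightOrth A := by
  obtain ⟨r, ⟨adj⟩⟩ := hadj.exists_rightAdjoint
  let f : ((r.obj X).obj : C) ⟶ X := adj.counit.app X
  obtain ⟨Y, g, h, hT⟩ := distinguished_cocone_triangle f
  have counit_bij : ∀ (a' : C), a' ∈ A →
      Function.Bijective (fun v : a' ⟶ (r.obj X).obj => v ≫ f) := by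
    intro a' ha'
    exact ((adj.homEquiv ⟨a', ha'⟩ X)).symm.bijective.comp
      (fsHomEquiv ⟨a', ha'⟩ (r.obj X)).symm.bijective
  refine ⟨(r.obj X).obj, Y, f, g, h, hT, (r.obj X).property, ?_⟩
  intro a' ha' u
  have hu3 : u ≫ h = 0 := by
    have hinj := (bij_postcomp_shift f hA.shiftClosed
      (fun W hW => counit_bij W hW) 1 a' ha').1
    apply hinj
    dsimp only
    have h31 : h ≫ (shiftFunctor C 1).map f = 0 := comp_distTriang_mor_zero₃₁ _ hT
    rw [assoc, h31, comp_zero, zero_comp]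
  obtain ⟨v, hv⟩ := Triangle.coyoneda_exact₃ _ hT u hu3
  obtain ⟨w, hw⟩ := (counit_bij a' ha').2 v
  dsimp only at hw
  rw [hv, ← hw]
  erw [assoc]
  have h12 : f ≫ (Triangle.mk f g h).mor₂ = 0 := comp_distTriang_mor_zero₁₂ _ hT
  exact (whisker_eq w h12).trans comp_zero

/-- Universal property of a reflection triangle. -/
lemma bij_of_refl {A : Set C} (hA : ShiftClosed A) {a X Y : C} {f : a ⟶ X} {g : X ⟶ Y}
    {h : Y ⟶ (a⟦(1 : ℤ)⟧ : C)} (hT : Triangle.mk f g h ∈ distTriang C) (ha : a ∈ A) :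
    ∀ Z ∈ rightOrth A, Function.Bijective (fun ψ : Y ⟶ Z => g ≫ ψ) := by
  intro Z hZ
  exact bij_hom_of_triangle _ hT (fun φ => hZ ha φ) (fun φ => hZ (hA ha 1) φ)

/-- `^⊥(A^⊥) ⊆ A` for an admissible triangulated subcategory `A`. -/
lemma leftOrth_rightOrth_sub (A : Set C) (hA : IsTriangSub A)
    (hadj : (ObjectProperty.ι (· ∈ A)).IsLeftAdjoint) {X : C}
    (hX : ∀ Z ∈ rightOrth A, ∀ f : X ⟶ Z, f = 0) : X ∈ A := by
  obtain ⟨a, Y, f, g, h, hT, ha, hY⟩ := exists_refl A hA hadj X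
  have hg : g = 0 := hX Y hY g
  have bij := bij_of_refl hA.shiftClosed hT ha Y hY
  have hid : 𝟙 Y = 0 := by
    apply bij.1
    dsimp only
    rw [comp_id, hg, comp_zero]
  have hzY : IsZero Y := (IsZero.iff_id_eq_zero Y).2 hid
  obtain ⟨s₀, hs₀⟩ : ∃ s₀ : X ⟶ a, 𝟙 X = s₀ ≫ f := Triangle.coyoneda_exact₂ _ hT (𝟙 X) (by exact (id_comp g).trans hg)
  have hs : 𝟙 X = (s₀ : X ⟶ a) ≫ f := hs₀
  have hfs : (f ≫ s₀ : a ⟶ a) = 𝟙 a := by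
    have ht : ((f ≫ s₀ : a ⟶ a) - 𝟙 a) ≫ (Triangle.mk f g h).invRotate.mor₂ = 0 := by
      show ((f ≫ s₀ : a ⟶ a) - 𝟙 a) ≫ f = 0
      rw [Preadditive.sub_comp, assoc, ← hs, comp_id, id_comp, sub_self]
    obtain ⟨w, hw⟩ := Triangle.coyoneda_exact₂ _
      (inv_rot_of_distTriang _ hT) _ ht
    have hwz : w = 0 := (isZero_shift hzY (-1)).eq_of_tgt w 0
    rw [← sub_eq_zero, hw, hwz, zero_comp]
    rfl
  have : IsIso f := ⟨(s₀ : X ⟶ a), hfs, hs.symm⟩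
  exact hA.iso_mem (asIso f) ha

/-- From a left adjoint of the inclusion of `A`, construct for every `X` a distinguished
triangle `K ⟶ X ⟶ a ⟶ K⟦1⟧` with `a ∈ A` and `K ∈ ^⊥A`. -/
lemma exists_corefl (A : Set C) (hA : IsTriangSub A)
    (hadj : (ObjectProperty.ι (· ∈ A)).IsRightAdjoint) (X : C) :
    ∃ (K a : C) (f : K ⟶ X) (g : X ⟶ a) (h : a ⟶ (K⟦(1 : ℤ)⟧ : C)),
      (Triangle.mk f g h ∈ distTriang C) ∧ a ∈ A ∧ K ∈ leftOrth A := by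
  obtain ⟨q, ⟨adj⟩⟩ := hadj.exists_leftAdjoint
  let η : X ⟶ ((q.obj X).obj : C) := adj.unit.app X
  obtain ⟨c, g', h', hTc⟩ := distinguished_cocone_triangle η
  have hS : (Triangle.mk η g' h').invRotate ∈ distTriang C := inv_rot_of_distTriang _ hTc
  have unit_bij : ∀ Z ∈ A,
      Function.Bijective
        (fun v : ((Triangle.mk η g' h').invRotate.obj₃ : C) ⟶ Z =>
          (Triangle.mk η g' h').invRotate.mor₂ ≫ v) := by
    intro a' ha'
    exact (adj.homEquiv X ⟨a', ha'⟩).bijective.comp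
      (fsHomEquiv (q.obj X) ⟨a', ha'⟩).symm.bijective
  have hKmem : ((Triangle.mk η g' h').invRotate.obj₁ : C) ∈ leftOrth A := by
    intro a' ha' φ
    exact first_obj_orth _ hS hA.shiftClosed unit_bij a' ha' φ
  exact ⟨_, _, (Triangle.mk η g' h').invRotate.mor₁, (Triangle.mk η g' h').invRotate.mor₂,
    (Triangle.mk η g' h').invRotate.mor₃, hS, (q.obj X).property, hKmem⟩

/-- Universal property of a coreflection triangle. -/
lemma bij_of_corefl {A : Set C} (hA : ShiftClosed A) {K X a : C} {f : K ⟶ X} {g : X ⟶ a}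
    {h : a ⟶ (K⟦(1 : ℤ)⟧ : C)} (hT : Triangle.mk f g h ∈ distTriang C) (ha : a ∈ A) :
    ∀ W ∈ leftOrth A, Function.Bijective (fun ψ : W ⟶ K => ψ ≫ f) := by
  intro W hW
  exact bij_hom_of_triangle' _ hT (fun φ => hW ha φ) (fun φ => hW (hA ha (-1)) φ)

/-! ### Reflector functors -/

/-- A functorial reflection onto `A^⊥` whose unit has its "cone" in `A`. -/
def IsReflector (A : Set C) (L : C ⥤ C) (U : 𝟭 C ⟶ L) : Prop :=
  ∀ X : C, L.obj X ∈ rightOrth A ∧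
    (∀ Z ∈ rightOrth A, Function.Bijective (fun ψ : L.obj X ⟶ Z => U.app X ≫ ψ)) ∧
    ∃ (a : C) (f : a ⟶ X) (h : L.obj X ⟶ (a⟦(1 : ℤ)⟧ : C)), a ∈ A ∧
      (Triangle.mk f (U.app X) h ∈ distTriang C)

lemma unit_precomp_bij {S : Set C} {p : C ⥤ ObjectProperty.FullSubcategory (· ∈ S)}
    (adj : p ⊣ ObjectProperty.ι (· ∈ S)) (X : C) :
    ∀ Z ∈ S, Function.Bijective
      (fun ψ : ((p.obj X).obj : C) ⟶ Z => adj.unit.app X ≫ ψ) := by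
  intro Z hZ
  exact (adj.homEquiv X ⟨Z, hZ⟩).bijective.comp (fsHomEquiv (p.obj X) ⟨Z, hZ⟩).symm.bijective

lemma isReflector_of_adjunction (A : Set C) (hA : IsTriangSub A)
    (hadjA : (ObjectProperty.ι (· ∈ A)).IsLeftAdjoint)
    (p : C ⥤ ObjectProperty.FullSubcategory (· ∈ rightOrth A))
    (adj : p ⊣ ObjectProperty.ι (· ∈ rightOrth A)) (L : C ⥤ C)
    (e : L ≅ p ⋙ ObjectProperty.ι (· ∈ rightOrth A)) :
    IsReflector A L (adj.unit ≫ e.inv) := by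
  intro X
  have hmem : L.obj X ∈ rightOrth A :=
    rightOrth_isoClosed (e.app X).symm (p.obj X).property
  have hbij : ∀ Z ∈ rightOrth A,
      Function.Bijective (fun ψ : L.obj X ⟶ Z => (adj.unit ≫ e.inv).app X ≫ ψ) := by
    intro Z hZ
    have heq : (fun ψ : L.obj X ⟶ Z => (adj.unit ≫ e.inv).app X ≫ ψ) =
        (fun χ : ((p.obj X).obj : C) ⟶ Z => adj.unit.app X ≫ χ) ∘
          (fun ψ : L.obj X ⟶ Z => e.inv.app X ≫ ψ) := by
      funext ψ
      simp only [NatTrans.comp_app, Function.comp_apply, assoc]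
    rw [heq]
    refine (unit_precomp_bij adj X Z hZ).comp ?_
    exact (Equiv.mk (fun ψ : L.obj X ⟶ Z => e.inv.app X ≫ ψ)
      (fun χ => e.hom.app X ≫ χ)
      (fun ψ => by dsimp only; rw [← assoc, e.hom_inv_id_app, id_comp])
      (fun χ => by dsimp only; rw [← assoc, e.inv_hom_id_app, id_comp])).bijective
  refine ⟨hmem, hbij, ?_⟩
  obtain ⟨c, g', h', hTc⟩ := distinguished_cocone_triangle ((adj.unit ≫ e.inv).app X)
  have hT' := inv_rot_of_distTriang _ hTc
  have horth := first_obj_orth _ hT'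
    (rightOrth_shiftClosed hA.shiftClosed)
    (fun Z hZ => hbij Z hZ)
  have haA : ((Triangle.mk ((adj.unit ≫ e.inv).app X) g' h').invRotate.obj₁ : C) ∈ A :=
    leftOrth_rightOrth_sub A hA hadjA (fun Z hZ φ => horth Z hZ φ)
  exact ⟨_, (Triangle.mk ((adj.unit ≫ e.inv).app X) g' h').invRotate.mor₁,
    (Triangle.mk ((adj.unit ≫ e.inv).app X) g' h').invRotate.mor₃, haA, hT'⟩

/-- Every admissible subcategory admits a reflector functor onto its right orthogonal. -/
lemma exists_reflector (A : Set C) (hA : IsTriangSub A)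
    (hadjR : (ObjectProperty.ι (· ∈ A)).IsRightAdjoint)
    (hadjL : (ObjectProperty.ι (· ∈ A)).IsLeftAdjoint) :
    ∃ (L : C ⥤ C) (U : 𝟭 C ⟶ L), IsReflector A L U := by
  have hrefl := exists_refl A hA hadjL
  choose a Y f g h hT ha hY using hrefl
  let F_obj : C → ObjectProperty.FullSubcategory (· ∈ rightOrth A) := fun X => ⟨Y X, hY X⟩
  let e : ∀ (X : C) (Zf : ObjectProperty.FullSubcategory (· ∈ rightOrth A)),
      (F_obj X ⟶ Zf) ≃ (X ⟶ (ObjectProperty.ι (· ∈ rightOrth A)).obj Zf) :=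
    fun X Zf => (fsHomEquiv (F_obj X) Zf).trans (Equiv.ofBijective (fun ψ => g X ≫ ψ)
      (bij_of_refl hA.shiftClosed (hT X) (ha X) Zf.obj Zf.property))
  have he : ∀ (X : C) (Z Z' : ObjectProperty.FullSubcategory (· ∈ rightOrth A))
      (k : Z ⟶ Z') (ψ : F_obj X ⟶ Z), e X Z' (ψ ≫ k) = e X Z ψ ≫
        (ObjectProperty.ι (· ∈ rightOrth A)).map k := by
    intro X Z Z' k ψ
    exact (assoc _ _ _).symm
  refine ⟨Adjunction.leftAdjointOfEquiv e he ⋙ ObjectProperty.ι (· ∈ rightOrth A),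
    (Adjunction.adjunctionOfEquivLeft e he).unit ≫ (Iso.refl _).inv, ?_⟩
  exact isReflector_of_adjunction A hA hadjL _ (Adjunction.adjunctionOfEquivLeft e he) _
    (Iso.refl _)

/-! ### Composite units and chains of reflections -/

def compUnit : ∀ {m : ℕ} (L : Fin m → C ⥤ C), (∀ j, 𝟭 C ⟶ L j) → (𝟭 C ⟶ compFam L)
  | 0, _, _ => 𝟙 (𝟭 C)
  | _ + 1, L, U =>
      compUnit (fun j => L j.succ) (fun j => U j.succ) ≫
        Functor.whiskerLeft (compFam (fun j => L j.succ)) (U 0)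

lemma semiorthogonal_tail {m : ℕ} {A' : Fin (m + 1) → Set C}
    (hso : Semiorthogonal A') : Semiorthogonal (fun j : Fin m => A' j.succ) := by
  intro l k hlk
  refine hso ?_
  rw [Fin.lt_def] at hlk ⊢
  simpa [Fin.val_succ] using Nat.succ_lt_succ hlk

lemma compChain : ∀ {m : ℕ} (A' : Fin m → Set C), (∀ j, IsTriangSub (A' j)) →
    Semiorthogonal A' → ∀ (L : Fin m → C ⥤ C) (U : ∀ j, 𝟭 C ⟶ L j),
    (∀ j, IsReflector (A' j) (L j) (U j)) →
    (∀ (X : C) (j : Fin m), (compFam L).obj X ∈ rightOrth (A' j)) ∧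
    (∀ (X Z : C), (∀ j, Z ∈ rightOrth (A' j)) →
      Function.Bijective
        (fun ψ : (compFam L).obj X ⟶ Z => (compUnit L U).app X ≫ ψ)) ∧
    (∀ (X : C) (P : Set C), IsTriangSub P → (∀ j, A' j ⊆ P) →
      (compFam L).obj X ∈ P → X ∈ P) := by
  intro m
  induction m with
  | zero =>
    intro A' _ _ L U _
    refine ⟨fun X j => j.elim0, fun X Z _ => ?_, fun X P _ _ hX => hX⟩
    have : (fun ψ : (compFam L).obj X ⟶ Z => (compUnit L U).app X ≫ ψ) =
        fun ψ => ψ := by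
      funext ψ
      exact id_comp ψ
    rw [this]
    exact Function.bijective_id
  | succ m ih =>
    intro A' hsub hso L U href
    obtain ⟨ih1, ih2, ih3⟩ := ih (fun j => A' j.succ) (fun j => hsub j.succ)
      (semiorthogonal_tail hso) (fun j => L j.succ) (fun j => U j.succ)
      (fun j => href j.succ)
    have key : ∀ X : C, True := fun _ => trivial
    refine ⟨?_, ?_, ?_⟩
    · intro X j
      obtain ⟨hmem0, hbij0, a, f, h3, ha, hT⟩ := href 0 ((compFam (fun j => L j.succ)).obj X)
      refine Fin.cases ?_ ?_ j
      · exact hmem0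
      · intro j
        intro x hx φ
        have hφ3 : φ ≫ h3 = 0 :=
          hso (Fin.succ_pos j) hx ((hsub 0).shift_mem 1 ha) (φ ≫ h3)
        obtain ⟨ψ, hψ⟩ := Triangle.coyoneda_exact₃ _ hT φ hφ3
        have hψ0 : ψ = 0 := ih1 X j hx ψ
        rw [hψ, hψ0, zero_comp]
        rfl
    · intro X Z hZ
      obtain ⟨hmem0, hbij0, _⟩ := href 0 ((compFam (fun j => L j.succ)).obj X)
      have heq : (fun ψ : (compFam L).obj X ⟶ Z => (compUnit L U).app X ≫ ψ) =
          (fun χ : (compFam (fun j => L j.succ)).obj X ⟶ Z =>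
            (compUnit (fun j => L j.succ) (fun j => U j.succ)).app X ≫ χ) ∘
          (fun ψ : (L 0).obj ((compFam (fun j => L j.succ)).obj X) ⟶ Z =>
            (U 0).app ((compFam (fun j => L j.succ)).obj X) ≫ ψ) := by
        funext ψ
        show ((compUnit (fun j => L j.succ) (fun j => U j.succ)).app X ≫
          (U 0).app _) ≫ ψ = _
        exact assoc _ _ _
      rw [heq]
      exact (ih2 X Z (fun j => hZ j.succ)).comp
        (hbij0 Z (hZ 0))
    · intro X P hP hPsub hXP
      obtain ⟨hmem0, hbij0, a, f, h3, ha, hT⟩ := href 0 ((compFam (fun j => L j.succ)).obj X)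
      have hY' : (compFam (fun j => L j.succ)).obj X ∈ P := by
        have hT4 := inv_rot_of_distTriang _ hT
        exact hP.cone_mem _ hT4 (hP.shift_mem (-1) hXP) (hPsub 0 ha)
      exact ih3 X P hP (fun j => hPsub j.succ) hY'

/-! ### Dual chain of coreflections -/

lemma dualChain : ∀ {m : ℕ} (A' : Fin m → Set C), (∀ j, IsTriangSub (A' j)) →
    Semiorthogonal A' →
    (∀ j, (ObjectProperty.ι (· ∈ A' j)).IsRightAdjoint) → ∀ X : C,
    ∃ (s : C) (e : s ⟶ X),
      (∀ j, s ∈ leftOrth (A' j)) ∧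
      (∀ W, (∀ j, W ∈ leftOrth (A' j)) →
        Function.Bijective (fun ψ : W ⟶ s => ψ ≫ e)) ∧
      (∀ P : Set C, IsTriangSub P → (∀ j, A' j ⊆ P) → s ∈ P → X ∈ P) ∧
      (∀ E : Set C, (∀ j, HomOrth (A' j) E) → (∀ z ∈ E, ∀ f : X ⟶ z, f = 0) →
        (∀ z ∈ E, ∀ f : s ⟶ z, f = 0)) := by
  intro m
  induction m with
  | zero =>
    intro A' _ _ _ X
    refine ⟨X, 𝟙 X, fun j => j.elim0, fun W _ => ?_, fun P _ _ hX => hX,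
      fun E _ hX => hX⟩
    have : (fun ψ : W ⟶ X => ψ ≫ 𝟙 X) = fun ψ => ψ := by
      funext ψ; exact comp_id ψ
    rw [this]
    exact Function.bijective_id
  | succ m ih =>
    intro A' hsub hso hadj X
    obtain ⟨K, a, f, g, h, hT, ha, hK⟩ := exists_corefl (A' 0) (hsub 0) (hadj 0) X
    obtain ⟨s, e', hmem, hbij, hfilt, hpres⟩ := ih (fun j => A' j.succ)
      (fun j => hsub j.succ) (semiorthogonal_tail hso) (fun j => hadj j.succ) K
    have hKE : ∀ E : Set C, HomOrth (A' 0) E → (∀ z ∈ E, ∀ φ : X ⟶ z, φ = 0) →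
        ∀ z ∈ E, ∀ φ : K ⟶ z, φ = 0 := by
      intro E hE hX z hz φ
      have hT4 := inv_rot_of_distTriang _ hT
      have h1 : (Triangle.mk f g h).invRotate.mor₁ ≫ φ = 0 :=
        hE ((hsub 0).shift_mem (-1) ha) hz _
      obtain ⟨ψ, hψ⟩ := Triangle.yoneda_exact₂ _ hT4 φ h1
      have hψ0 : ψ = 0 := hX z hz ψ
      rw [hψ, hψ0, comp_zero]
      rfl
    refine ⟨s, e' ≫ f, ?_, ?_, ?_, ?_⟩
    · intro j
      refine Fin.cases ?_ ?_ j
      · intro z hz φ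
        exact hpres (A' 0) (fun j => hso (Fin.succ_pos j))
          (fun z' hz' ψ => hK hz' ψ) z hz φ
      · intro j z hz φ
        exact hmem j hz φ
    · intro W hW
      have heq : (fun ψ : W ⟶ s => ψ ≫ (e' ≫ f)) =
          (fun χ : W ⟶ K => χ ≫ f) ∘ (fun ψ : W ⟶ s => ψ ≫ e') := by
        funext ψ
        exact (assoc _ _ _).symm
      rw [heq]
      exact (bij_of_corefl (hsub 0).shiftClosed hT ha W (hW 0)).comp
        (hbij W (fun j => hW j.succ))
    · intro P hP hPsub hs
      have hKP : K ∈ P := hfilt P hP (fun j => hPsub j.succ) hs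
      have hT4 := inv_rot_of_distTriang _ hT
      exact hP.cone_mem _ hT4 (hP.shift_mem (-1) (hPsub 0 ha)) hKP
    · intro E hE hX
      exact hpres E (fun j => hE j.succ) (hKE E (hE 0) hX)


/-- A pointwise universal arrow from a full subcategory produces a right adjoint of the
inclusion. -/
lemma isLeftAdjoint_incl_of_pointwise {S : Set C}
    (d : C → C) (fd : ∀ X, d X ⟶ X) (hd : ∀ X, d X ∈ S)
    (hbij : ∀ (X W : C), W ∈ S → Function.Bijective (fun ψ : W ⟶ d X => ψ ≫ fd X)) :
    (ObjectProperty.ι (· ∈ S)).IsLeftAdjoint := by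
  let E : ∀ (X W : C), W ∈ S → ((W ⟶ d X) ≃ (W ⟶ X)) :=
    fun X W hW => Equiv.ofBijective _ (hbij X W hW)
  let Rmap : ∀ {X X' : C}, (X ⟶ X') → (d X ⟶ d X') :=
    fun {X X'} f => (E X' (d X) (hd X)).symm (fd X ≫ f)
  have hRmap : ∀ {X X' : C} (f : X ⟶ X'), Rmap f ≫ fd X' = fd X ≫ f :=
    fun {X X'} f => Equiv.apply_symm_apply (E X' (d X) (hd X)) (fd X ≫ f)
  have hinj : ∀ (X : C) {W : C}, W ∈ S → ∀ (a b : W ⟶ d X),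
      a ≫ fd X = b ≫ fd X → a = b :=
    fun X {W} hW a b h => (hbij X W hW).1 h
  let R : C ⥤ ObjectProperty.FullSubcategory (· ∈ S) :=
    { obj := fun X => ⟨d X, hd X⟩
      map := fun {X X'} f => ObjectProperty.homMk (Rmap f : d X ⟶ d X')
      map_id := fun X => by
        apply ObjectProperty.hom_ext
        apply hinj X (hd X)
        show Rmap (𝟙 X) ≫ fd X = 𝟙 (d X) ≫ fd X
        rw [hRmap, comp_id, id_comp]
      map_comp := fun {X Y Z} f g => by
        apply ObjectProperty.hom_ext
        apply hinj Z (hd X)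
        show Rmap (f ≫ g) ≫ fd Z = (Rmap f ≫ Rmap g) ≫ fd Z
        rw [hRmap, assoc, hRmap, ← assoc, ← assoc, hRmap] }
  have adj : ObjectProperty.ι (· ∈ S) ⊣ R :=
    Adjunction.mkOfHomEquiv
      { homEquiv := fun W X => ((E X W.obj W.property).symm.trans (fsHomEquiv W (R.obj X)).symm :
          ((ObjectProperty.ι (· ∈ S)).obj W ⟶ X) ≃ (W ⟶ R.obj X))
        homEquiv_naturality_left_symm := by
          intro W' W X k t
          let kc : (W'.obj : C) ⟶ (W.obj : C) := k.hom
          let tc : (W.obj : C) ⟶ d X := t.hom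
          exact Category.assoc kc tc (fd X)
        homEquiv_naturality_right := by
          intro W X X' φ f
          apply ObjectProperty.hom_ext
          apply (E X' W.obj W.property).injective
          refine Eq.trans (Equiv.apply_symm_apply (E X' W.obj W.property) (φ ≫ f)) ?_
          show φ ≫ f = ((E X W.obj W.property).symm φ ≫ Rmap f) ≫ fd X'
          rw [assoc, hRmap, ← assoc]
          have hφ : (E X W.obj W.property).symm φ ≫ fd X = φ :=
            Equiv.apply_symm_apply (E X W.obj W.property) φ
          rw [hφ] }
  exact ⟨_, ⟨adj⟩⟩

/-! ### Main theorem -/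

theorem statement8' {n : ℕ} (A : Fin n → Set C)
    (hadm : ∀ j, IsAdmissible (A j)) (hso : Semiorthogonal A) :
    IsAdmissible (generated (⋃ j, A j)) ∧
    ∀ Lgen : C ⥤ C, IsLeftMutation (generated (⋃ j, A j)) Lgen →
      ∀ L : Fin n → (C ⥤ C), (∀ j, IsLeftMutation (A j) (L j)) →
        Nonempty (Lgen ≅ compFam L) := by
  have hsub : ∀ j, IsTriangSub (A j) := fun j => (hadm j).1
  have hD : IsTriangSub (generated (⋃ j, A j)) := generated_isTriangSub _
  have hAD : ∀ j, A j ⊆ generated (⋃ j, A j) :=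
    fun j => (Set.subset_iUnion A j).trans (subset_generated _)
  have htoD : ∀ Z : C, (∀ j, Z ∈ rightOrth (A j)) →
      Z ∈ rightOrth (generated (⋃ j, A j)) := fun Z hZ =>
    mem_rightOrth_generated A hsub hZ
  have hBshift : ShiftClosed {Z : C | ∀ j, Z ∈ rightOrth (A j)} :=
    fun Z hZ k j => rightOrth_shiftClosed (hsub j).shiftClosed (hZ j) k
  -- choose reflector functors for each `A j`
  have hrefl : ∀ j, ∃ (L : C ⥤ C) (U : 𝟭 C ⟶ L), IsReflector (A j) L U :=
    fun j => exists_reflector (A j) (hsub j) (hadm j).2.1 (hadm j).2.2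
  choose L0 U0 hLU using hrefl
  obtain ⟨cc1, cc2, cc3⟩ := compChain A hsub hso L0 U0 hLU
  -- the left orthogonal of the intersection of the right orthogonals is `D`
  have hLOD : ∀ W : C, (∀ Z : C, (∀ j, Z ∈ rightOrth (A j)) → ∀ f : W ⟶ Z, f = 0) →
      W ∈ generated (⋃ j, A j) := by
    intro W hW
    have hu : (compUnit L0 U0).app W = 0 := hW _ (fun j => cc1 W j) _
    have hid : 𝟙 ((compFam L0).obj W) = 0 := by
      apply (cc2 W _ (fun j => cc1 W j)).1
      dsimp only
      rw [comp_id, comp_zero, hu]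
    exact cc3 W _ hD hAD (hD.zero_mem ((IsZero.iff_id_eq_zero _).2 hid))
  -- pointwise data for the right adjoint of the inclusion of `D`
  have hRA : ∀ X : C, ∃ (d : C) (fd : d ⟶ X), d ∈ generated (⋃ j, A j) ∧
      ∀ W ∈ generated (⋃ j, A j),
        Function.Bijective (fun ψ : W ⟶ d => ψ ≫ fd) := by
    intro X
    obtain ⟨c, g', h', hTc⟩ := distinguished_cocone_triangle ((compUnit L0 U0).app X)
    have hT' := inv_rot_of_distTriang _ hTc
    have horth := first_obj_orth _ hT' hBshift
      (fun Z hZ => cc2 X Z hZ)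
    have hdD : ((Triangle.mk ((compUnit L0 U0).app X) g' h').invRotate.obj₁ : C) ∈
        generated (⋃ j, A j) := hLOD _ (fun Z hZ φ => horth Z hZ φ)
    refine ⟨_, (Triangle.mk ((compUnit L0 U0).app X) g' h').invRotate.mor₁, hdD, ?_⟩
    intro W hWD
    refine bij_hom_of_triangle' _ hT' ?_ ?_
    · intro φ
      exact htoD _ (fun j => cc1 X j) hWD φ
    · intro φ
      exact htoD _
        (fun j => rightOrth_shiftClosed (hsub j).shiftClosed (cc1 X j) (-1)) hWD φ
  choose dR fR hdR hbR using hRA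
  have hIsLA : (ObjectProperty.ι (· ∈ generated (⋃ j, A j))).IsLeftAdjoint :=
    isLeftAdjoint_incl_of_pointwise dR fR hdR (fun X W hW => hbR X W hW)
  -- pointwise data for the left adjoint of the inclusion of `D`
  have hcor : ∀ j, (ObjectProperty.ι (· ∈ A j)).IsRightAdjoint :=
    fun j => (hadm j).2.1
  have hBL : ShiftClosed {W : C | ∀ j, W ∈ leftOrth (A j)} :=
    fun W hW k j => leftOrth_shiftClosed (hsub j).shiftClosed (hW j) k
  have hLA : ∀ X : C, ∃ (pX : C) (g : X ⟶ pX), pX ∈ generated (⋃ j, A j) ∧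
      ∀ d ∈ generated (⋃ j, A j),
        Function.Bijective (fun ψ : pX ⟶ d => g ≫ ψ) := by
    intro X
    obtain ⟨s, e', hmem, hbij, hfilt, hpres⟩ := dualChain A hsub hso hcor X
    obtain ⟨pX, g, h, hT⟩ := distinguished_cocone_triangle e'
    have horth := third_obj_orth _ hT hBL (fun W hW => hbij W hW)
    have hpD : pX ∈ generated (⋃ j, A j) := by
      obtain ⟨s2, e2, hmem2, hbij2, hfilt2, _⟩ := dualChain A hsub hso hcor pX
      have he2 : e2 = 0 := horth s2 hmem2 e2
      have hid : 𝟙 s2 = 0 := by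
        apply (hbij2 s2 hmem2).1
        dsimp only
        rw [id_comp, zero_comp, he2]
      exact hfilt2 _ hD hAD (hD.zero_mem ((IsZero.iff_id_eq_zero _).2 hid))
    refine ⟨pX, g, hpD, ?_⟩
    intro d hdD
    refine bij_hom_of_triangle _ hT ?_ ?_
    · intro φ
      exact mem_leftOrth_generated A hsub hmem d hdD φ
    · intro φ
      exact mem_leftOrth_generated A hsub
        (fun j => leftOrth_shiftClosed (hsub j).shiftClosed (hmem j) 1) d hdD φ
  choose pL gL hpL hbL using hLA
  have hIsRA : (ObjectProperty.ι (· ∈ generated (⋃ j, A j))).IsRightAdjoint := by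
    let eL : ∀ (X : C) (Zd : ObjectProperty.FullSubcategory (· ∈ generated (⋃ j, A j))),
        ((⟨pL X, hpL X⟩ : ObjectProperty.FullSubcategory (· ∈ generated (⋃ j, A j))) ⟶ Zd) ≃
          (X ⟶ (ObjectProperty.ι (· ∈ generated (⋃ j, A j))).obj Zd) :=
      fun X Zd => (fsHomEquiv _ Zd).trans (Equiv.ofBijective
        (fun ψ : pL X ⟶ (Zd.obj : C) => gL X ≫ ψ) (hbL X Zd.obj Zd.property))
    have he : ∀ (X : C) (Z Z' : ObjectProperty.FullSubcategory (· ∈ generated (⋃ j, A j)))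
        (k : Z ⟶ Z') (ψ : (⟨pL X, hpL X⟩ :
          ObjectProperty.FullSubcategory (· ∈ generated (⋃ j, A j))) ⟶ Z),
        eL X Z' (ψ ≫ k) = eL X Z ψ ≫
          (ObjectProperty.ι (· ∈ generated (⋃ j, A j))).map k := by
      intro X Z Z' k ψ
      exact (assoc _ _ _).symm
    exact ⟨_, ⟨Adjunction.adjunctionOfEquivLeft eL he⟩⟩
  refine ⟨⟨hD, hIsRA, hIsLA⟩, ?_⟩
  -- Part 2: the mutation functor is the composite of the individual mutations
  intro Lgen hLgen L hL
  have hU : ∀ j, ∃ U : 𝟭 C ⟶ L j, IsReflector (A j) (L j) U := by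
    intro j
    obtain ⟨p, ⟨adj⟩, ⟨e⟩⟩ := hL j
    exact ⟨adj.unit ≫ e.inv,
      isReflector_of_adjunction (A j) (hsub j) ((hadm j).2.2) p adj (L j) e⟩
  choose U hUr using hU
  obtain ⟨dd1, dd2, dd3⟩ := compChain A hsub hso L U hUr
  let q : C ⥤ ObjectProperty.FullSubcategory (· ∈ rightOrth (generated (⋃ j, A j))) :=
    ObjectProperty.lift _ (compFam L) (fun X => htoD _ (fun j => dd1 X j))
  have hqbij : ∀ (X : C) (Z : ObjectProperty.FullSubcategory (· ∈ rightOrth (generated (⋃ j, A j)))),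
      Function.Bijective
        (fun ψ : (compFam L).obj X ⟶ (Z.obj : C) => (compUnit L U).app X ≫ ψ) :=
    fun X Z => dd2 X Z.obj (fun j => rightOrth_antitone (hAD j) Z.property)
  let adjq : q ⊣ ObjectProperty.ι (· ∈ rightOrth (generated (⋃ j, A j))) :=
    Adjunction.mkOfHomEquiv
      { homEquiv := fun X Z => (fsHomEquiv (q.obj X) Z).trans (Equiv.ofBijective _ (hqbij X Z))
        homEquiv_naturality_left_symm := by
          intro X' X Z f g
          beta_reduce
          rw [Equiv.symm_apply_eq]
          have hg : (compUnit L U).app X ≫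
              ((Equiv.ofBijective
                (fun ψ : (compFam L).obj X ⟶ (Z.obj : C) =>
                  (compUnit L U).app X ≫ ψ) (hqbij X Z)).symm g) = g :=
            Equiv.apply_symm_apply (Equiv.ofBijective
              (fun ψ : (compFam L).obj X ⟶ (Z.obj : C) =>
                (compUnit L U).app X ≫ ψ) (hqbij X Z)) g
          have hnat : (compUnit L U).app X' ≫ (compFam L).map f =
              f ≫ (compUnit L U).app X :=
            ((compUnit L U).naturality f).symm
          show f ≫ g = (compUnit L U).app X' ≫ ((compFam L).map f ≫
            ((Equiv.ofBijective
              (fun ψ : (compFam L).obj X ⟶ (Z.obj : C) =>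
                (compUnit L U).app X ≫ ψ) (hqbij X Z)).symm g))
          rw [← assoc, hnat, assoc, hg]
        homEquiv_naturality_right := by
          intro X Z Z' ψ k
          exact (assoc _ _ _).symm }
  obtain ⟨p, ⟨adjp⟩, ⟨ep⟩⟩ := hLgen
  exact ⟨ep ≪≫ Functor.isoWhiskerRight (Adjunction.leftAdjointUniq adjp adjq) _ ≪≫
    ObjectProperty.liftCompιIso _ _ _⟩

/-- if `A 0, …, A (n-1)` (with `n ≥ 2`) are admissible subcategories
forming a semiorthogonal sequence, then the generated subcategory `⟨A 0, …, A (n-1)⟩` is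
admissible and its left mutation functor is naturally isomorphic to the composition
`L_{A 0} ∘ L_{A 1} ∘ ⋯ ∘ L_{A (n-1)}`. -/
theorem statement8 {n : ℕ} (hn : 2 ≤ n) (A : Fin n → Set C)
    (hadm : ∀ j, IsAdmissible (A j)) (hso : Semiorthogonal A) :
    IsAdmissible (generated (⋃ j, A j)) ∧
    ∀ Lgen : C ⥤ C, IsLeftMutation (generated (⋃ j, A j)) Lgen →
      ∀ L : Fin n → (C ⥤ C), (∀ j, IsLeftMutation (A j) (L j)) →
        Nonempty (Lgen ≅ compFam L) :=
  statement8' A hadm hso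

end Statements
end HPD
end

section
/- Let A_1, …, A_n be admissible full triangulated subcategories of a triangulated category T forming a semiorthogonal sequence, and let 2 ≤ k ≤ n. Then the sequence A_1, …, A_{k−2}, L_{A_{k−1}}(A_k), A_{k−1}, A_{k+1}, …, A_n (where L_{A_{k−1}}(A_k) is the essential image of A_k under the left mutation through A_{k−1}) is again a semiorthogonal sequence, and it generates the same subcategory: ⟨A_1, …, A_{k−1}, A_k, A_{k+1}, …, A_n⟩ = ⟨A_1, …, A_{k−2}, L_{A_{k−1}}(A_k), A_{k−1}, A_{k+1}, …, A_n⟩. -/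
namespace HPD

open CategoryTheory Category Limits Pretriangulated

universe w v u

variable {C : Type u} [Category.{v} C]

section Statements

variable [HasZeroObject C] [Preadditive C] [HasShift C ℤ]
  [∀ n : ℤ, (shiftFunctor C n).Additive] [Pretriangulated C]

lemma rightOrth_iso_mem {B : Set C} {X Y : C} (e : X ≅ Y) (hX : X ∈ rightOrth B) :
    Y ∈ rightOrth B := by
  intro Z hZ f
  have h0 : f ≫ e.inv = 0 := hX hZ _
  have h1 : f = (f ≫ e.inv) ≫ e.hom := by simp
  rw [h1, h0, zero_comp]

lemma essImageSet_subset_rightOrth {B : Set C} {L : C ⥤ C} (hL : IsLeftMutation B L)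
    (S : Set C) : essImageSet L.obj S ⊆ rightOrth B := by
  obtain ⟨p, ⟨adj⟩, ⟨eL⟩⟩ := hL
  rintro Y ⟨X, -, ⟨e⟩⟩
  exact rightOrth_iso_mem e (rightOrth_iso_mem (eL.app X).symm (p.obj X).property)

lemma mutation_triangle {B : Set C} (hBt : IsTriangSub B)
    (hadj : (ObjectProperty.ι (· ∈ B)).IsLeftAdjoint)
    {L : C ⥤ C} (hL : IsLeftMutation B L) (X : C) :
    ∃ b, b ∈ B ∧ ∃ (f : b ⟶ X) (g : X ⟶ L.obj X) (h : L.obj X ⟶ b⟦(1 : ℤ)⟧),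
      Triangle.mk f g h ∈ distTriang C := by
  haveI := hadj
  let ι := ObjectProperty.ι (· ∈ B)
  let adjR : ι ⊣ ι.rightAdjoint := Adjunction.ofIsLeftAdjoint ι
  let b : C := (ι.rightAdjoint.obj X).obj
  have hb : b ∈ B := (ι.rightAdjoint.obj X).property
  let ε : b ⟶ X := adjR.counit.app X
  obtain ⟨Y, g, h, hT⟩ := Pretriangulated.distinguished_cocone_triangle ε
  -- composition with the counit is a bijection on Hom's from objects of `B`
  have bij : ∀ {Z : C}, Z ∈ B → Function.Bijective (fun u : Z ⟶ b => u ≫ ε) := by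
    intro Z hZ
    have hu : ∀ w : Z ⟶ b, w ≫ ε = (adjR.homEquiv ⟨Z, hZ⟩ X).symm (ObjectProperty.homMk w) := by
      intro w
      rw [Adjunction.homEquiv_counit]
      rfl
    constructor
    · intro u v huv
      have h2 := (adjR.homEquiv ⟨Z, hZ⟩ X).symm.injective (((hu u).symm.trans huv).trans (hu v))
      exact congrArg (fun q => q.hom) h2
    · intro w
      refine ⟨(adjR.homEquiv ⟨Z, hZ⟩ X w).hom, ?_⟩
      have hsa := (adjR.homEquiv ⟨Z, hZ⟩ X).symm_apply_apply w
      exact (hu _).trans hsa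
  -- the cone `Y` lies in the right orthogonal of `B`
  have hY : Y ∈ rightOrth B := by
    intro Z hZ φ
    have hψ : φ ≫ h = 0 := by
      have hZ' : (Z⟦(-1 : ℤ)⟧ : C) ∈ B := hBt.shift_mem (-1) hZ
      let eZ : ((Z⟦(-1 : ℤ)⟧ : C)⟦(1 : ℤ)⟧ : C) ≅ Z := (shiftEquiv C (1 : ℤ)).counitIso.app Z
      obtain ⟨ψ', hψ'⟩ := (shiftFunctor C (1 : ℤ)).map_surjective (eZ.hom ≫ (φ ≫ h))
      have h31 : h ≫ ε⟦(1 : ℤ)⟧' = 0 := Pretriangulated.comp_distTriang_mor_zero₃₁ _ hT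
      have hc : ψ' ≫ ε = 0 := by
        apply (shiftFunctor C (1 : ℤ)).map_injective
        rw [Functor.map_comp, hψ', Functor.map_zero, assoc, assoc, h31, comp_zero, comp_zero]
      have hψ'0 : ψ' = 0 := by
        apply (bij hZ').injective
        simp only [hc, zero_comp]
      rw [hψ'0, Functor.map_zero] at hψ'
      calc φ ≫ h = eZ.inv ≫ (eZ.hom ≫ (φ ≫ h)) := by simp
        _ = 0 := by rw [← hψ', comp_zero]
    obtain ⟨χ, hχ⟩ := Pretriangulated.Triangle.coyoneda_exact₃ _ hT φ hψ
    obtain ⟨u, hu⟩ := (bij hZ).surjective χ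
    have h12 : ε ≫ g = 0 := Pretriangulated.comp_distTriang_mor_zero₁₂ _ hT
    rw [hχ, ← hu]
    show (u ≫ ε) ≫ g = 0
    rw [assoc, h12, comp_zero]
  -- identify `Y` with `L.obj X`
  obtain ⟨p, ⟨adjp⟩, ⟨eL⟩⟩ := hL
  let ι' := ObjectProperty.ι (· ∈ rightOrth B)
  let Yhat : ObjectProperty.FullSubcategory (· ∈ rightOrth B) := ⟨Y, hY⟩
  let ghat : p.obj X ⟶ Yhat := (adjp.homEquiv X Yhat).symm g
  have hgbij : ∀ (W : C), W ∈ rightOrth B →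
      Function.Bijective (fun e : Y ⟶ W => g ≫ e) := by
    intro W hW
    constructor
    · intro e₁ e₂ he
      have he' : g ≫ e₁ = g ≫ e₂ := he
      have hsub : g ≫ (e₁ - e₂) = 0 := by
        rw [Preadditive.comp_sub, he', sub_self]
      obtain ⟨v, hv⟩ := Pretriangulated.Triangle.yoneda_exact₃ _ hT (e₁ - e₂) hsub
      have hv0 : v = 0 := hW (hBt.shift_mem 1 hb) v
      have hz : e₁ - e₂ = 0 := by rw [hv0, comp_zero] at hv; exact hv
      exact sub_eq_zero.mp hz
    · intro w
      have hw : ε ≫ w = 0 := hW hb (ε ≫ w)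
      obtain ⟨v, hv⟩ := Pretriangulated.Triangle.yoneda_exact₂ _ hT w hw
      exact ⟨v, hv.symm⟩
  haveI : IsIso ghat := by
    apply isIso_of_coyoneda_map_bijective
    intro W
    have key : ∀ x : Yhat ⟶ W, ghat ≫ x = (adjp.homEquiv X W).symm (g ≫ ι'.map x) := by
      intro x
      apply (adjp.homEquiv X W).injective
      rw [Equiv.apply_symm_apply, Adjunction.homEquiv_naturality_right, Equiv.apply_symm_apply]
    have heq : (fun x : Yhat ⟶ W => ghat ≫ x) =
        (adjp.homEquiv X W).symm ∘ (fun e : Y ⟶ W.obj => g ≫ e) ∘ (fun x : Yhat ⟶ W => ι'.map x) := by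
      funext x
      exact key x
    rw [heq]
    exact ((adjp.homEquiv X W).symm.bijective).comp ((hgbij W.obj W.property).comp
        ((ObjectProperty.fullyFaithfulι _).map_bijective Yhat W))
  let φiso : L.obj X ≅ Y := eL.app X ≪≫ ι'.mapIso (asIso ghat)
  refine ⟨b, hb, ε, g ≫ φiso.inv, φiso.hom ≫ h, ?_⟩
  refine Pretriangulated.isomorphic_distinguished _ hT _ ?_
  exact Pretriangulated.Triangle.isoMk _ _ (Iso.refl _) (Iso.refl _) φiso
    (by dsimp [Triangle.mk]; simp) (by dsimp [Triangle.mk]; simp) (by dsimp [Triangle.mk]; simp)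

lemma isTriangSub_generated (S : Set C) : IsTriangSub (generated S) where
  zero_mem := fun _ hZ => Set.mem_sInter.2 fun _ hP => hP.1.zero_mem hZ
  iso_mem := fun _ _ e hX => Set.mem_sInter.2 fun P hP =>
    hP.1.iso_mem e (Set.mem_sInter.1 hX P hP)
  shift_mem := fun _ m hX => Set.mem_sInter.2 fun P hP =>
    hP.1.shift_mem m (Set.mem_sInter.1 hX P hP)
  cone_mem := fun T hT h1 h2 => Set.mem_sInter.2 fun P hP =>
    hP.1.cone_mem T hT (Set.mem_sInter.1 h1 P hP) (Set.mem_sInter.1 h2 P hP)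

lemma generated_subset_of {S P : Set C} (hP : IsTriangSub P) (hSP : S ⊆ P) :
    generated S ⊆ P :=
  fun _ hx => Set.mem_sInter.1 hx P ⟨hP, hSP⟩

/-- given a semiorthogonal sequence of admissible subcategories
`A 0, …, A (n-1)` (1-based: `A_1, …, A_n`) and `2 ≤ k ≤ n`, replacing the pair
`(A_{k-1}, A_k)` by `(L_{A_{k-1}}(A_k), A_{k-1})` again yields a semiorthogonal
sequence generating the same subcategory. -/
theorem statement9 {n : ℕ} (A : Fin n → Set C)
    (hadm : ∀ j, IsAdmissible (A j)) (hso : Semiorthogonal A)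
    (k : ℕ) (hk2 : 2 ≤ k) (hkn : k ≤ n)
    (L : C ⥤ C) (hL : IsLeftMutation (A ⟨k - 2, by omega⟩) L) :
    Semiorthogonal (fun j : Fin n =>
      if (j : ℕ) = k - 2 then essImageSet L.obj (A ⟨k - 1, by omega⟩)
      else if (j : ℕ) = k - 1 then A ⟨k - 2, by omega⟩
      else A j) ∧
    generated (⋃ j, A j) =
      generated (⋃ j : Fin n,
        (if (j : ℕ) = k - 2 then essImageSet L.obj (A ⟨k - 1, by omega⟩)
         else if (j : ℕ) = k - 1 then A ⟨k - 2, by omega⟩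
         else A j)) := by
  have hkn' : k - 2 < n := by omega
  have hkn'' : k - 1 < n := by omega
  have hBt : IsTriangSub (A ⟨k - 2, hkn'⟩) := (hadm _).1
  have tri := mutation_triangle hBt (hadm ⟨k - 2, hkn'⟩).2.2 hL
  have fltlt : ∀ (a : ℕ) (ha : a < n) (j : Fin n), a < (j : ℕ) → (⟨a, ha⟩ : Fin n) < j :=
    fun _ _ _ h => h
  have fltlt' : ∀ (j : Fin n) (a : ℕ) (ha : a < n), (j : ℕ) < a → j < (⟨a, ha⟩ : Fin n) :=
    fun _ _ _ h => h
  constructor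
  · intro l k' hlk X hX Y hY f
    have hlk' : (l : ℕ) < (k' : ℕ) := hlk
    dsimp only at hX hY
    by_cases hl2 : (l : ℕ) = k - 2
    · rw [if_pos hl2] at hY
      by_cases hk1 : (k' : ℕ) = k - 1
      · rw [if_neg (by omega), if_pos hk1] at hX
        exact essImageSet_subset_rightOrth hL _ hY hX f
      · rw [if_neg (by omega), if_neg hk1] at hX
        obtain ⟨Xd, hXd, ⟨e⟩⟩ := hY
        obtain ⟨b, hb, f₁, g₁, h₁, hT⟩ := tri Xd
        have h3 : (f ≫ e.inv) ≫ h₁ = 0 :=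
          hso (fltlt (k - 2) hkn' k' (by omega)) hX (hBt.shift_mem 1 hb) _
        obtain ⟨v, hv⟩ := Pretriangulated.Triangle.coyoneda_exact₃ _ hT (f ≫ e.inv) h3
        have hv0 : v = 0 := hso (fltlt (k - 1) hkn'' k' (by omega)) hX hXd v
        have hfe : f ≫ e.inv = 0 := by rw [hv0, zero_comp] at hv; exact hv
        calc f = (f ≫ e.inv) ≫ e.hom := by simp
          _ = 0 := by rw [hfe, zero_comp]
    · by_cases hl1 : (l : ℕ) = k - 1
      · rw [if_neg hl2, if_pos hl1] at hY
        rw [if_neg (by omega), if_neg (by omega)] at hX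
        exact hso (fltlt (k - 2) hkn' k' (by omega)) hX hY f
      · rw [if_neg hl2, if_neg hl1] at hY
        by_cases hk2' : (k' : ℕ) = k - 2
        · rw [if_pos hk2'] at hX
          obtain ⟨Xd, hXd, ⟨e⟩⟩ := hX
          obtain ⟨b, hb, f₁, g₁, h₁, hT⟩ := tri Xd
          have h4 : g₁ ≫ (e.hom ≫ f) = 0 :=
            hso (fltlt' l (k - 1) hkn'' (by omega)) hXd hY _
          obtain ⟨v, hv⟩ := Pretriangulated.Triangle.yoneda_exact₃ _ hT (e.hom ≫ f) h4
          have hv0 : v = 0 := hso (fltlt' l (k - 2) hkn' (by omega)) (hBt.shift_mem 1 hb) hY v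
          have hef : e.hom ≫ f = 0 := by rw [hv0, comp_zero] at hv; exact hv
          calc f = e.inv ≫ (e.hom ≫ f) := by simp
            _ = 0 := by rw [hef, comp_zero]
        · by_cases hk1' : (k' : ℕ) = k - 1
          · rw [if_neg hk2', if_pos hk1'] at hX
            exact hso (fltlt' l (k - 2) hkn' (by omega)) hX hY f
          · rw [if_neg hk2', if_neg hk1'] at hX
            exact hso hlk hX hY f
  · apply subset_antisymm
    · apply generated_subset_of (isTriangSub_generated _)
      intro x hx
      obtain ⟨j, hj⟩ := Set.mem_iUnion.1 hx
      by_cases hj2 : (j : ℕ) = k - 2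
      · apply subset_generated
        apply Set.mem_iUnion.2
        refine ⟨⟨k - 1, hkn''⟩, ?_⟩
        show x ∈ if k - 1 = k - 2 then _ else
          if k - 1 = k - 1 then _ else _
        rw [if_neg (by omega), if_pos rfl]
        have hjj : j = ⟨k - 2, hkn'⟩ := Fin.ext hj2
        rwa [hjj] at hj
      · by_cases hj1 : (j : ℕ) = k - 1
        · have hjj : j = ⟨k - 1, hkn''⟩ := Fin.ext hj1
          rw [hjj] at hj
          obtain ⟨b, hb, f₁, g₁, h₁, hT⟩ := tri x
          have hLx : L.obj x ∈ generated (⋃ j : Fin n,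
              (if (j : ℕ) = k - 2 then essImageSet L.obj (A ⟨k - 1, by omega⟩)
               else if (j : ℕ) = k - 1 then A ⟨k - 2, by omega⟩ else A j)) := by
            apply subset_generated
            apply Set.mem_iUnion.2
            refine ⟨⟨k - 2, hkn'⟩, ?_⟩
            show L.obj x ∈ if k - 2 = k - 2 then _ else
              if k - 2 = k - 1 then _ else _
            rw [if_pos rfl]
            exact ⟨x, hj, ⟨Iso.refl _⟩⟩
          have hbx : b ∈ generated (⋃ j : Fin n,
              (if (j : ℕ) = k - 2 then essImageSet L.obj (A ⟨k - 1, by omega⟩)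
               else if (j : ℕ) = k - 1 then A ⟨k - 2, by omega⟩ else A j)) := by
            apply subset_generated
            apply Set.mem_iUnion.2
            refine ⟨⟨k - 1, hkn''⟩, ?_⟩
            show b ∈ if k - 1 = k - 2 then _ else
              if k - 1 = k - 1 then _ else _
            rw [if_neg (by omega), if_pos rfl]
            exact hb
          exact (isTriangSub_generated _).cone_mem (Triangle.mk f₁ g₁ h₁).invRotate
            (Pretriangulated.inv_rot_of_distTriang _ hT)
            ((isTriangSub_generated _).shift_mem (-1) hLx) hbx
        · apply subset_generated
          apply Set.mem_iUnion.2
          refine ⟨j, ?_⟩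
          show x ∈ if (j : ℕ) = k - 2 then _ else if (j : ℕ) = k - 1 then _ else A j
          rw [if_neg hj2, if_neg hj1]
          exact hj
    · apply generated_subset_of (isTriangSub_generated _)
      intro x hx
      obtain ⟨j, hj⟩ := Set.mem_iUnion.1 hx
      by_cases hj2 : (j : ℕ) = k - 2
      · rw [if_pos hj2] at hj
        obtain ⟨Xd, hXd, ⟨e⟩⟩ := hj
        obtain ⟨b, hb, f₁, g₁, h₁, hT⟩ := tri Xd
        have hbmem : b ∈ generated (⋃ j, A j) :=
          subset_generated _ (Set.mem_iUnion.2 ⟨⟨k - 2, hkn'⟩, hb⟩)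
        have hXdmem : Xd ∈ generated (⋃ j, A j) :=
          subset_generated _ (Set.mem_iUnion.2 ⟨⟨k - 1, hkn''⟩, hXd⟩)
        have hLXd := (isTriangSub_generated _).cone_mem _ hT hbmem hXdmem
        exact (isTriangSub_generated _).iso_mem e hLXd
      · by_cases hj1 : (j : ℕ) = k - 1
        · rw [if_neg hj2, if_pos hj1] at hj
          exact subset_generated _ (Set.mem_iUnion.2 ⟨⟨k - 2, hkn'⟩, hj⟩)
        · rw [if_neg hj2, if_neg hj1] at hj
          exact subset_generated _ (Set.mem_iUnion.2 ⟨j, hj⟩)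

end Statements
end HPD
end

section
/- Let T be a k-linear triangulated category with a Serre functor S, and let A ⊆ T be an admissible full triangulated subcategory with inclusion i_A and right adjoint i_A^!. Then A admits a Serre functor, given by S_A := i_A^! ∘ S ∘ i_A : A → A; that is, S_A is an autoequivalence of A with bi-functorial isomorphisms Hom_A(F, G) ≅ Hom_A(G, S_A(F))^* for all F, G ∈ A. -/
namespace HPD

open CategoryTheory Category Limits Pretriangulated

universe w v u

variable {C : Type u} [Category.{v} C]

section SerreAux

open Module

lemma flip_bij {k V W : Type*} [Field k] [AddCommGroup V] [Module k V]
    [AddCommGroup W] [Module k W] [FiniteDimensional k V] [FiniteDimensional k W]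
    (B : V →ₗ[k] Module.Dual k W) (hB : Function.Bijective B) :
    Function.Bijective B.flip := by
  have hinj : Function.Injective B.flip := by
    rw [← LinearMap.ker_eq_bot, LinearMap.ker_eq_bot']
    intro w hw
    rw [← Module.forall_dual_apply_eq_zero_iff k w]
    intro φ
    obtain ⟨v, rfl⟩ := hB.2 φ
    have : B.flip w v = (0 : Module.Dual k V) v := by rw [hw]
    simpa using this
  have hdim : Module.finrank k W = Module.finrank k (Module.Dual k V) := by
    rw [Subspace.dual_finrank_eq (V := V), (LinearEquiv.ofBijective B hB).finrank_eq,
      Subspace.dual_finrank_eq]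
  refine ⟨hinj, fun φ => ⟨(B.flip.linearEquivOfInjective hinj hdim).symm φ, ?_⟩⟩
  have := (B.flip.linearEquivOfInjective hinj hdim).apply_symm_apply φ
  rwa [LinearMap.linearEquivOfInjective_apply] at this

variable [HasZeroObject C] [Preadditive C] [HasShift C ℤ]
  [∀ n : ℤ, (shiftFunctor C n).Additive] [Pretriangulated C]
variable (k : Type w) [Field k] [CategoryTheory.Linear k C]
  (SD : SerreData k C) (A : Set C)
  (ρ : C ⥤ ObjectProperty.FullSubcategory (· ∈ A))
  (adjR : ObjectProperty.ι (· ∈ A) ⊣ ρ)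

/-- Composing with the counit of `adjR`. -/
noncomputable def serreE (X Y : ObjectProperty.FullSubcategory (· ∈ A)) :
    ((ObjectProperty.ι (· ∈ A)).obj Y ⟶
        (ObjectProperty.ι (· ∈ A)).obj
          ((ObjectProperty.ι (· ∈ A) ⋙ SD.S.functor ⋙ ρ).obj X)) →ₗ[k]
      ((ObjectProperty.ι (· ∈ A)).obj Y ⟶ SD.S.functor.obj X.obj) :=
  Linear.rightComp k _ (adjR.counit.app (SD.S.functor.obj X.obj))

lemma serreE_apply (X Y : ObjectProperty.FullSubcategory (· ∈ A)) (ψ) :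
    serreE k SD A ρ adjR X Y ψ = ψ ≫ adjR.counit.app (SD.S.functor.obj X.obj) := rfl

lemma serreE_bijective (X Y : ObjectProperty.FullSubcategory (· ∈ A)) :
    Function.Bijective (serreE k SD A ρ adjR X Y) := by
  have h : ⇑(serreE k SD A ρ adjR X Y) =
      ⇑(adjR.homEquiv Y (SD.S.functor.obj X.obj)).symm ∘ ObjectProperty.homMk := by
    funext g
    rw [Function.comp_apply, serreE_apply, Adjunction.homEquiv_counit]
    rfl
  rw [h]
  exact (adjR.homEquiv _ _).symm.bijective.comp
    ⟨fun _ _ h => congrArg InducedCategory.Hom.hom h, ObjectProperty.homMk_surjective⟩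

/-- The induced Serre pairing on the subcategory. -/
noncomputable def paA (X Y : ObjectProperty.FullSubcategory (· ∈ A)) :
    ((ObjectProperty.ι (· ∈ A)).obj X ⟶ (ObjectProperty.ι (· ∈ A)).obj Y)
      →ₗ[k] Module.Dual k ((ObjectProperty.ι (· ∈ A)).obj Y ⟶
        (ObjectProperty.ι (· ∈ A)).obj
          ((ObjectProperty.ι (· ∈ A) ⋙ SD.S.functor ⋙ ρ).obj X)) :=
  ((LinearEquiv.ofBijective (serreE k SD A ρ adjR X Y)
      (serreE_bijective k SD A ρ adjR X Y)).dualMap).toLinearMap ∘ₗ SD.pairing X.obj Y.obj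

lemma paA_apply (X Y : ObjectProperty.FullSubcategory (· ∈ A)) (φ) (ψ) :
    paA k SD A ρ adjR X Y φ ψ =
      SD.pairing X.obj Y.obj φ (ψ ≫ adjR.counit.app (SD.S.functor.obj X.obj)) := rfl

lemma paA_bijective (X Y : ObjectProperty.FullSubcategory (· ∈ A)) :
    Function.Bijective (paA k SD A ρ adjR X Y) :=
  ((LinearEquiv.ofBijective (serreE k SD A ρ adjR X Y)
      (serreE_bijective k SD A ρ adjR X Y)).dualMap.bijective).comp
    (SD.pairing_bijective X.obj Y.obj)

lemma paA_nat_left (X' X Y : ObjectProperty.FullSubcategory (· ∈ A)) (a : X' ⟶ X)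
    (φ : (ObjectProperty.ι (· ∈ A)).obj X ⟶ (ObjectProperty.ι (· ∈ A)).obj Y)
    (ψ : (ObjectProperty.ι (· ∈ A)).obj Y ⟶
      (ObjectProperty.ι (· ∈ A)).obj
        ((ObjectProperty.ι (· ∈ A) ⋙ SD.S.functor ⋙ ρ).obj X')) :
    paA k SD A ρ adjR X' Y ((ObjectProperty.ι (· ∈ A)).map a ≫ φ) ψ =
      paA k SD A ρ adjR X Y φ (ψ ≫ (ObjectProperty.ι (· ∈ A)).map
        ((ObjectProperty.ι (· ∈ A) ⋙ SD.S.functor ⋙ ρ).map a)) := by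
  rw [paA_apply, paA_apply, SD.pairing_nat_left, Category.assoc, Category.assoc]
  congr 1
  congr 1
  simpa using (adjR.counit.naturality (SD.S.functor.map
    ((ObjectProperty.ι (· ∈ A)).map a))).symm

lemma paA_nat_right (X Y Y' : ObjectProperty.FullSubcategory (· ∈ A)) (b : Y ⟶ Y')
    (φ : (ObjectProperty.ι (· ∈ A)).obj X ⟶ (ObjectProperty.ι (· ∈ A)).obj Y)
    (ψ : (ObjectProperty.ι (· ∈ A)).obj Y' ⟶
      (ObjectProperty.ι (· ∈ A)).obj
        ((ObjectProperty.ι (· ∈ A) ⋙ SD.S.functor ⋙ ρ).obj X)) :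
    paA k SD A ρ adjR X Y' (φ ≫ (ObjectProperty.ι (· ∈ A)).map b) ψ =
      paA k SD A ρ adjR X Y φ ((ObjectProperty.ι (· ∈ A)).map b ≫ ψ) := by
  rw [paA_apply, paA_apply, SD.pairing_nat_right, Category.assoc]
  rfl


lemma paA_key (X Y : ObjectProperty.FullSubcategory (· ∈ A)) (f : X ⟶ Y)
    (ψ : (ObjectProperty.ι (· ∈ A)).obj Y ⟶ (ObjectProperty.ι (· ∈ A)).obj (((ObjectProperty.ι (· ∈ A)) ⋙ SD.S.functor ⋙ ρ).obj X)) :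
    paA k SD A ρ adjR Y (((ObjectProperty.ι (· ∈ A)) ⋙ SD.S.functor ⋙ ρ).obj X) ψ
        ((ObjectProperty.ι (· ∈ A)).map (((ObjectProperty.ι (· ∈ A)) ⋙ SD.S.functor ⋙ ρ).map f)) =
      paA k SD A ρ adjR X Y ((ObjectProperty.ι (· ∈ A)).map f) ψ := by
  have h1 := paA_nat_left k SD A ρ adjR X Y (((ObjectProperty.ι (· ∈ A)) ⋙ SD.S.functor ⋙ ρ).obj X) f ψ
    (𝟙 ((ObjectProperty.ι (· ∈ A)).obj (((ObjectProperty.ι (· ∈ A)) ⋙ SD.S.functor ⋙ ρ).obj X)))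
  have h2 := paA_nat_right k SD A ρ adjR X Y (((ObjectProperty.ι (· ∈ A)) ⋙ SD.S.functor ⋙ ρ).obj X)
    (ObjectProperty.homMk ψ) ((ObjectProperty.ι (· ∈ A)).map f)
    (𝟙 ((ObjectProperty.ι (· ∈ A)).obj (((ObjectProperty.ι (· ∈ A)) ⋙ SD.S.functor ⋙ ρ).obj X)))
  simp only [ObjectProperty.ι_map, Category.id_comp, Category.comp_id] at h1 h2 ⊢
  exact h1.symm.trans h2

lemma paA_flip_injective (hfd : ∀ X Y : C, FiniteDimensional k (X ⟶ Y))
    (X Y : ObjectProperty.FullSubcategory (· ∈ A)) :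
    Function.Injective (paA k SD A ρ adjR X Y).flip := by
  haveI := hfd ((ObjectProperty.ι (· ∈ A)).obj X) ((ObjectProperty.ι (· ∈ A)).obj Y)
  haveI := hfd ((ObjectProperty.ι (· ∈ A)).obj Y) ((ObjectProperty.ι (· ∈ A)).obj (((ObjectProperty.ι (· ∈ A)) ⋙ SD.S.functor ⋙ ρ).obj X))
  exact (flip_bij _ (paA_bijective k SD A ρ adjR X Y)).1

include adjR in
lemma phi_faithful : ((ObjectProperty.ι (· ∈ A)) ⋙ SD.S.functor ⋙ ρ).Faithful := by
  constructor
  intro X Y f g h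
  apply (ObjectProperty.ι (· ∈ A)).map_injective
  apply (paA_bijective k SD A ρ adjR X Y).1
  apply LinearMap.ext
  intro ψ
  rw [← paA_key k SD A ρ adjR X Y f ψ, ← paA_key k SD A ρ adjR X Y g ψ, h]

include adjR in
lemma phi_full (hfd : ∀ X Y : C, FiniteDimensional k (X ⟶ Y)) :
    ((ObjectProperty.ι (· ∈ A)) ⋙ SD.S.functor ⋙ ρ).Full := by
  constructor
  intro X Y g
  obtain ⟨f, hf⟩ := (paA_bijective k SD A ρ adjR X Y).2
    ((paA k SD A ρ adjR Y (((ObjectProperty.ι (· ∈ A)) ⋙ SD.S.functor ⋙ ρ).obj X)).flip ((ObjectProperty.ι (· ∈ A)).map g))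
  refine ⟨ObjectProperty.homMk f, ?_⟩
  apply (ObjectProperty.ι (· ∈ A)).map_injective
  apply paA_flip_injective k SD A ρ adjR hfd Y (((ObjectProperty.ι (· ∈ A)) ⋙ SD.S.functor ⋙ ρ).obj X)
  apply LinearMap.ext
  intro ψ
  rw [LinearMap.flip_apply, LinearMap.flip_apply, paA_key k SD A ρ adjR X Y (ObjectProperty.homMk f) ψ]
  have : paA k SD A ρ adjR X Y ((ObjectProperty.ι (· ∈ A)).map (ObjectProperty.homMk f)) = paA k SD A ρ adjR X Y f := rfl
  rw [this, hf, LinearMap.flip_apply]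

variable (lam : C ⥤ ObjectProperty.FullSubcategory (· ∈ A))
  (adjL : lam ⊣ ObjectProperty.ι (· ∈ A))

/-- `φ ↦ α⁻¹ ≫ S (η ≫ φ)`, the natural map `Hom(λ S⁻¹ ι G, Y) → Hom(ι G, S ι Y)`. -/
noncomputable def uL (G Y : ObjectProperty.FullSubcategory (· ∈ A)) :
    ((ObjectProperty.ι (· ∈ A)).obj (lam.obj (SD.S.inverse.obj ((ObjectProperty.ι (· ∈ A)).obj G))) ⟶ (ObjectProperty.ι (· ∈ A)).obj Y) →ₗ[k]
      ((ObjectProperty.ι (· ∈ A)).obj G ⟶ SD.S.functor.obj ((ObjectProperty.ι (· ∈ A)).obj Y)) :=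
  letI := SD.additive
  letI := SD.linear
  Linear.leftComp k _ ((SD.S.counitIso.app ((ObjectProperty.ι (· ∈ A)).obj G)).inv) ∘ₗ
    (SD.S.functor.mapLinearMap k ∘ₗ
      Linear.leftComp k _ (adjL.unit.app (SD.S.inverse.obj ((ObjectProperty.ι (· ∈ A)).obj G))))

lemma uL_apply (G Y : ObjectProperty.FullSubcategory (· ∈ A))
    (φ : (ObjectProperty.ι (· ∈ A)).obj (lam.obj (SD.S.inverse.obj ((ObjectProperty.ι (· ∈ A)).obj G))) ⟶ (ObjectProperty.ι (· ∈ A)).obj Y) :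
    uL k SD A lam adjL G Y φ = (SD.S.counitIso.app ((ObjectProperty.ι (· ∈ A)).obj G)).inv ≫
      SD.S.functor.map (adjL.unit.app (SD.S.inverse.obj ((ObjectProperty.ι (· ∈ A)).obj G)) ≫ φ) := rfl

lemma uL_bijective (G Y : ObjectProperty.FullSubcategory (· ∈ A)) :
    Function.Bijective (uL k SD A lam adjL G Y) := by
  letI := SD.additive
  letI := SD.linear
  have hu : Function.Bijective
      (fun φ : ((ObjectProperty.ι (· ∈ A)).obj (lam.obj (SD.S.inverse.obj ((ObjectProperty.ι (· ∈ A)).obj G))) ⟶ (ObjectProperty.ι (· ∈ A)).obj Y) =>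
        adjL.unit.app (SD.S.inverse.obj ((ObjectProperty.ι (· ∈ A)).obj G)) ≫ φ) := by
    have he : (fun φ : ((ObjectProperty.ι (· ∈ A)).obj (lam.obj (SD.S.inverse.obj ((ObjectProperty.ι (· ∈ A)).obj G))) ⟶ (ObjectProperty.ι (· ∈ A)).obj Y) =>
        adjL.unit.app (SD.S.inverse.obj ((ObjectProperty.ι (· ∈ A)).obj G)) ≫ φ) =
        ⇑(adjL.homEquiv (SD.S.inverse.obj ((ObjectProperty.ι (· ∈ A)).obj G)) Y) ∘ ObjectProperty.homMk := by
      funext φ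
      rw [Function.comp_apply, Adjunction.homEquiv_unit]
      rfl
    rw [he]
    exact (adjL.homEquiv _ _).bijective.comp
      ⟨fun _ _ h => congrArg InducedCategory.Hom.hom h, ObjectProperty.homMk_surjective⟩
  have hm : Function.Bijective
      (SD.S.functor.map : (SD.S.inverse.obj ((ObjectProperty.ι (· ∈ A)).obj G) ⟶ (ObjectProperty.ι (· ∈ A)).obj Y) →
        (SD.S.functor.obj (SD.S.inverse.obj ((ObjectProperty.ι (· ∈ A)).obj G)) ⟶ SD.S.functor.obj ((ObjectProperty.ι (· ∈ A)).obj Y))) :=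
    ⟨fun _ _ h => SD.S.functor.map_injective h, SD.S.functor.map_surjective⟩
  have hc : Function.Bijective
      (fun g : (SD.S.functor.obj (SD.S.inverse.obj ((ObjectProperty.ι (· ∈ A)).obj G)) ⟶
          SD.S.functor.obj ((ObjectProperty.ι (· ∈ A)).obj Y)) => (SD.S.counitIso.app ((ObjectProperty.ι (· ∈ A)).obj G)).inv ≫ g) :=
    Function.bijective_iff_has_inverse.2
      ⟨fun g => (SD.S.counitIso.app ((ObjectProperty.ι (· ∈ A)).obj G)).hom ≫ g,
        fun g => by simp, fun g => by simp⟩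
  have hco : ⇑(uL k SD A lam adjL G Y) =
      (fun g : (SD.S.functor.obj (SD.S.inverse.obj ((ObjectProperty.ι (· ∈ A)).obj G)) ⟶
          SD.S.functor.obj ((ObjectProperty.ι (· ∈ A)).obj Y)) => (SD.S.counitIso.app ((ObjectProperty.ι (· ∈ A)).obj G)).inv ≫ g) ∘
        ((SD.S.functor.map : (SD.S.inverse.obj ((ObjectProperty.ι (· ∈ A)).obj G) ⟶ (ObjectProperty.ι (· ∈ A)).obj Y) → _) ∘
          (fun φ : ((ObjectProperty.ι (· ∈ A)).obj (lam.obj (SD.S.inverse.obj ((ObjectProperty.ι (· ∈ A)).obj G))) ⟶ (ObjectProperty.ι (· ∈ A)).obj Y) =>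
            adjL.unit.app (SD.S.inverse.obj ((ObjectProperty.ι (· ∈ A)).obj G)) ≫ φ)) := rfl
  rw [hco]
  exact hc.comp (hm.comp hu)

/-- The natural bijection `Hom(Y, S_A(λ S⁻¹ ι G)) ≃ Hom(Y, G)`. -/
noncomputable def betaE (hfd : ∀ X Y : C, FiniteDimensional k (X ⟶ Y))
    (G Y : ObjectProperty.FullSubcategory (· ∈ A)) :
    ((ObjectProperty.ι (· ∈ A)).obj Y ⟶ (ObjectProperty.ι (· ∈ A)).obj (((ObjectProperty.ι (· ∈ A)) ⋙ SD.S.functor ⋙ ρ).obj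
        (lam.obj (SD.S.inverse.obj ((ObjectProperty.ι (· ∈ A)).obj G))))) ≃ ((ObjectProperty.ι (· ∈ A)).obj Y ⟶ (ObjectProperty.ι (· ∈ A)).obj G) :=
  letI := hfd ((lam.obj (SD.S.inverse.obj ((ObjectProperty.ι (· ∈ A)).obj G))).obj) ((ObjectProperty.ι (· ∈ A)).obj Y)
  letI := hfd ((ObjectProperty.ι (· ∈ A)).obj Y) (SD.S.functor.obj (lam.obj (SD.S.inverse.obj ((ObjectProperty.ι (· ∈ A)).obj G))).obj)
  (Equiv.ofBijective _
      (serreE_bijective k SD A ρ adjR (lam.obj (SD.S.inverse.obj ((ObjectProperty.ι (· ∈ A)).obj G))) Y)).trans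
    ((Equiv.ofBijective _ (flip_bij _ (SD.pairing_bijective
        (lam.obj (SD.S.inverse.obj ((ObjectProperty.ι (· ∈ A)).obj G))).obj ((ObjectProperty.ι (· ∈ A)).obj Y)))).trans
      (((LinearEquiv.ofBijective (uL k SD A lam adjL G Y)
            (uL_bijective k SD A lam adjL G Y)).symm.dualMap.toEquiv).trans
        (Equiv.ofBijective _
          (SD.pairing_bijective ((ObjectProperty.ι (· ∈ A)).obj Y) ((ObjectProperty.ι (· ∈ A)).obj G))).symm))

lemma betaE_spec (hfd : ∀ X Y : C, FiniteDimensional k (X ⟶ Y))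
    (G Y : ObjectProperty.FullSubcategory (· ∈ A))
    (g : (ObjectProperty.ι (· ∈ A)).obj Y ⟶ (ObjectProperty.ι (· ∈ A)).obj (((ObjectProperty.ι (· ∈ A)) ⋙ SD.S.functor ⋙ ρ).obj
      (lam.obj (SD.S.inverse.obj ((ObjectProperty.ι (· ∈ A)).obj G)))))
    (χ : (ObjectProperty.ι (· ∈ A)).obj G ⟶ SD.S.functor.obj ((ObjectProperty.ι (· ∈ A)).obj Y)) :
    SD.pairing ((ObjectProperty.ι (· ∈ A)).obj Y) ((ObjectProperty.ι (· ∈ A)).obj G) (betaE k SD A ρ adjR lam adjL hfd G Y g) χ =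
      SD.pairing (lam.obj (SD.S.inverse.obj ((ObjectProperty.ι (· ∈ A)).obj G))).obj ((ObjectProperty.ι (· ∈ A)).obj Y)
        ((LinearEquiv.ofBijective (uL k SD A lam adjL G Y)
            (uL_bijective k SD A lam adjL G Y)).symm χ)
        (g ≫ adjR.counit.app (SD.S.functor.obj
          (lam.obj (SD.S.inverse.obj ((ObjectProperty.ι (· ∈ A)).obj G))).obj)) := by
  have h0 : SD.pairing ((ObjectProperty.ι (· ∈ A)).obj Y) ((ObjectProperty.ι (· ∈ A)).obj G)
        (betaE k SD A ρ adjR lam adjL hfd G Y g) =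
      (Equiv.ofBijective _ (SD.pairing_bijective ((ObjectProperty.ι (· ∈ A)).obj Y) ((ObjectProperty.ι (· ∈ A)).obj G)))
        ((Equiv.ofBijective _ (SD.pairing_bijective ((ObjectProperty.ι (· ∈ A)).obj Y) ((ObjectProperty.ι (· ∈ A)).obj G))).symm
          ((LinearEquiv.ofBijective (uL k SD A lam adjL G Y)
              (uL_bijective k SD A lam adjL G Y)).symm.dualMap
            ((SD.pairing (lam.obj (SD.S.inverse.obj ((ObjectProperty.ι (· ∈ A)).obj G))).obj ((ObjectProperty.ι (· ∈ A)).obj Y)).flip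
              (serreE k SD A ρ adjR (lam.obj (SD.S.inverse.obj ((ObjectProperty.ι (· ∈ A)).obj G))) Y g)))) := rfl
  rw [h0, Equiv.apply_symm_apply, LinearEquiv.dualMap_apply]
  rfl

lemma betaE_natural (hfd : ∀ X Y : C, FiniteDimensional k (X ⟶ Y))
    (G Y' Y : ObjectProperty.FullSubcategory (· ∈ A)) (h : (ObjectProperty.ι (· ∈ A)).obj Y' ⟶ (ObjectProperty.ι (· ∈ A)).obj Y)
    (g : (ObjectProperty.ι (· ∈ A)).obj Y ⟶ (ObjectProperty.ι (· ∈ A)).obj (((ObjectProperty.ι (· ∈ A)) ⋙ SD.S.functor ⋙ ρ).obj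
      (lam.obj (SD.S.inverse.obj ((ObjectProperty.ι (· ∈ A)).obj G))))) :
    betaE k SD A ρ adjR lam adjL hfd G Y' (h ≫ g) =
      h ≫ betaE k SD A ρ adjR lam adjL hfd G Y g := by
  apply (SD.pairing_bijective ((ObjectProperty.ι (· ∈ A)).obj Y') ((ObjectProperty.ι (· ∈ A)).obj G)).1
  apply LinearMap.ext
  intro χ
  rw [betaE_spec]
  rw [SD.pairing_nat_left h (betaE k SD A ρ adjR lam adjL hfd G Y g) χ]
  rw [betaE_spec]
  have hcl : (LinearEquiv.ofBijective (uL k SD A lam adjL G Y)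
        (uL_bijective k SD A lam adjL G Y)).symm (χ ≫ SD.S.functor.map h) =
      ((LinearEquiv.ofBijective (uL k SD A lam adjL G Y')
        (uL_bijective k SD A lam adjL G Y')).symm χ) ≫ h := by
    apply (uL_bijective k SD A lam adjL G Y).1
    have e1 : uL k SD A lam adjL G Y
        ((LinearEquiv.ofBijective (uL k SD A lam adjL G Y)
          (uL_bijective k SD A lam adjL G Y)).symm (χ ≫ SD.S.functor.map h)) =
        χ ≫ SD.S.functor.map h :=
      (LinearEquiv.ofBijective (uL k SD A lam adjL G Y)
        (uL_bijective k SD A lam adjL G Y)).apply_symm_apply _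
    have e2 : uL k SD A lam adjL G Y'
        ((LinearEquiv.ofBijective (uL k SD A lam adjL G Y')
          (uL_bijective k SD A lam adjL G Y')).symm χ) = χ :=
      (LinearEquiv.ofBijective (uL k SD A lam adjL G Y')
        (uL_bijective k SD A lam adjL G Y')).apply_symm_apply _
    rw [e1]
    rw [uL_apply]
    rw [← Category.assoc (adjL.unit.app _), Functor.map_comp, ← Category.assoc]
    rw [← uL_apply k SD A lam adjL G Y', e2]
  rw [hcl]
  rw [SD.pairing_nat_right h _ _]
  rw [Category.assoc]

end SerreAux

section Statements

variable [HasZeroObject C] [Preadditive C] [HasShift C ℤ]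
  [∀ n : ℤ, (shiftFunctor C n).Additive] [Pretriangulated C]

/-- an admissible subcategory `A` of a `k`-linear triangulated category
with Serre functor `S` admits a Serre functor, namely `S_A := i_A^! ∘ S ∘ i_A`:
it is an autoequivalence of `A` with bifunctorial isomorphisms
`Hom_A(F, G) ≅ Hom_A(G, S_A F)^*`. -/
theorem statement12 (k : Type w) [Field k] [CategoryTheory.Linear k C]
    (SD : SerreData k C) (hfd : ∀ X Y : C, FiniteDimensional k (X ⟶ Y))
    (A : Set C) (hA : IsAdmissible A)
    (ρ : C ⥤ ObjectProperty.FullSubcategory (· ∈ A))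
    (adjR : ObjectProperty.ι (· ∈ A) ⊣ ρ) :
    (ObjectProperty.ι (· ∈ A) ⋙ SD.S.functor ⋙ ρ).IsEquivalence ∧
    ∃ pairingA : ∀ X Y : ObjectProperty.FullSubcategory (· ∈ A),
        ((ObjectProperty.ι (· ∈ A)).obj X ⟶ (ObjectProperty.ι (· ∈ A)).obj Y)
          →ₗ[k] Module.Dual k ((ObjectProperty.ι (· ∈ A)).obj Y ⟶
            (ObjectProperty.ι (· ∈ A)).obj
              ((ObjectProperty.ι (· ∈ A) ⋙ SD.S.functor ⋙ ρ).obj X)),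
      (∀ X Y, Function.Bijective (pairingA X Y)) ∧
      (∀ (X' X Y : ObjectProperty.FullSubcategory (· ∈ A)) (a : X' ⟶ X)
          (φ : (ObjectProperty.ι (· ∈ A)).obj X ⟶ (ObjectProperty.ι (· ∈ A)).obj Y)
          (ψ : (ObjectProperty.ι (· ∈ A)).obj Y ⟶
            (ObjectProperty.ι (· ∈ A)).obj
              ((ObjectProperty.ι (· ∈ A) ⋙ SD.S.functor ⋙ ρ).obj X')),
        pairingA X' Y ((ObjectProperty.ι (· ∈ A)).map a ≫ φ) ψ =
          pairingA X Y φ (ψ ≫ (ObjectProperty.ι (· ∈ A)).map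
            ((ObjectProperty.ι (· ∈ A) ⋙ SD.S.functor ⋙ ρ).map a))) ∧
      (∀ (X Y Y' : ObjectProperty.FullSubcategory (· ∈ A)) (b : Y ⟶ Y')
          (φ : (ObjectProperty.ι (· ∈ A)).obj X ⟶ (ObjectProperty.ι (· ∈ A)).obj Y)
          (ψ : (ObjectProperty.ι (· ∈ A)).obj Y' ⟶
            (ObjectProperty.ι (· ∈ A)).obj
              ((ObjectProperty.ι (· ∈ A) ⋙ SD.S.functor ⋙ ρ).obj X)),
        pairingA X Y' (φ ≫ (ObjectProperty.ι (· ∈ A)).map b) ψ =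
          pairingA X Y φ ((ObjectProperty.ι (· ∈ A)).map b ≫ ψ)) := by
  obtain ⟨lam, ⟨adjL⟩⟩ := hA.2.1.exists_leftAdjoint
  constructor
  · haveI := phi_faithful k SD A ρ adjR
    haveI := phi_full k SD A ρ adjR hfd
    refine { essSurj := ?_ }
    constructor
    intro G
    refine ⟨lam.obj (SD.S.inverse.obj ((ObjectProperty.ι (· ∈ A)).obj G)), ⟨?_⟩⟩
    let u : (ObjectProperty.ι (· ∈ A)).obj
          (((ObjectProperty.ι (· ∈ A)) ⋙ SD.S.functor ⋙ ρ).obj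
            (lam.obj (SD.S.inverse.obj ((ObjectProperty.ι (· ∈ A)).obj G)))) ⟶
        (ObjectProperty.ι (· ∈ A)).obj G :=
      betaE k SD A ρ adjR lam adjL hfd G
        (((ObjectProperty.ι (· ∈ A)) ⋙ SD.S.functor ⋙ ρ).obj
          (lam.obj (SD.S.inverse.obj ((ObjectProperty.ι (· ∈ A)).obj G)))) (𝟙 _)
    let v := (betaE k SD A ρ adjR lam adjL hfd G G).symm (𝟙 _)
    have h1 : v ≫ u = 𝟙 _ := by
      have hn := betaE_natural k SD A ρ adjR lam adjL hfd G G
        (((ObjectProperty.ι (· ∈ A)) ⋙ SD.S.functor ⋙ ρ).obj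
          (lam.obj (SD.S.inverse.obj ((ObjectProperty.ι (· ∈ A)).obj G)))) v (𝟙 _)
      rw [Category.comp_id] at hn
      rw [← hn]
      exact (betaE k SD A ρ adjR lam adjL hfd G G).apply_symm_apply _
    have h2 : u ≫ v = 𝟙 _ := by
      apply (betaE k SD A ρ adjR lam adjL hfd G
        (((ObjectProperty.ι (· ∈ A)) ⋙ SD.S.functor ⋙ ρ).obj
          (lam.obj (SD.S.inverse.obj ((ObjectProperty.ι (· ∈ A)).obj G))))).injective
      have hn := betaE_natural k SD A ρ adjR lam adjL hfd G
        (((ObjectProperty.ι (· ∈ A)) ⋙ SD.S.functor ⋙ ρ).obj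
          (lam.obj (SD.S.inverse.obj ((ObjectProperty.ι (· ∈ A)).obj G)))) G u v
      rw [hn, (betaE k SD A ρ adjR lam adjL hfd G G).apply_symm_apply, Category.comp_id]
    exact ⟨ObjectProperty.homMk u, ObjectProperty.homMk v, ObjectProperty.hom_ext _ h2, ObjectProperty.hom_ext _ h1⟩
  · exact ⟨paA k SD A ρ adjR, paA_bijective k SD A ρ adjR,
      paA_nat_left k SD A ρ adjR, paA_nat_right k SD A ρ adjR⟩

end Statements
end HPD
end

section
/- Let T = ⟨A_1, …, A_n⟩ be a semiorthogonal decomposition of a triangulated category T. Then for every object t ∈ T the chain of morphisms 0 = t_n → t_{n−1} → … → t_0 = t with cone(t_k → t_{k−1}) ∈ A_k is unique up to canonical isomorphism; moreover, every morphism f : t → t′ lifts uniquely to a morphism of such chains (a family f_k : t_k → t′_k with f_0 = f commuting with the chain maps), and the induced morphisms on the cones make the assignment t ↦ a_k (the component of t in A_k) a functor pr_k : T → A_k, called the projection functor onto A_k. -/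
namespace HPD

open CategoryTheory Category Limits Pretriangulated

universe w v u

variable {C : Type u} [Category.{v} C]

section Statements

variable [HasZeroObject C] [Preadditive C] [HasShift C ℤ]
  [∀ n : ℤ, (shiftFunctor C n).Additive] [Pretriangulated C]

/-- A filtration `0 = t_n → t_{n-1} → ⋯ → t_0 = t` of an object `t` with chosen cones
`a j ∈ A j`, as in the definition of a semiorthogonal decomposition. -/
structure SODFilt {n : ℕ} (A : Fin n → Set C) (t : C) where
  F : Fin (n + 1) → C
  f : ∀ j : Fin n, F j.succ ⟶ F j.castSucc
  isZero_last : IsZero (F (Fin.last n))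
  base : F 0 = t
  a : Fin n → C
  g : ∀ j : Fin n, F j.castSucc ⟶ a j
  h : ∀ j : Fin n, a j ⟶ (F j.succ)⟦(1 : ℤ)⟧
  dist : ∀ j : Fin n, Triangle.mk (f j) (g j) (h j) ∈ distTriang C
  mem : ∀ j : Fin n, a j ∈ A j

section Aux

variable {n : ℕ} {A : Fin n → Set C}

/-- Vanishing: any map from a filtration stage `F k` to an object of `A l` with `l < k`
is zero. -/
lemma SODFilt.vanish (hSOD : IsSOD A) {t : C} (P : SODFilt A t) :
    ∀ (k : Fin (n + 1)) (l : Fin n), (l : ℕ) < (k : ℕ) → ∀ Y ∈ A l, ∀ φ : P.F k ⟶ Y,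
      φ = 0 := by
  intro k
  induction k using Fin.reverseInduction with
  | last => exact fun l _ Y _ φ => P.isZero_last.eq_of_src φ 0
  | cast i ih =>
    intro l hl Y hY φ
    have hl' : (l : ℕ) < (i : ℕ) := by simpa using hl
    have h0 : P.f i ≫ φ = 0 :=
      ih l (by simp; omega) Y hY _
    obtain ⟨g, hg⟩ : ∃ g : P.a i ⟶ Y, φ = P.g i ≫ g :=
      Triangle.yoneda_exact₂ _ (P.dist i) φ h0
    have hg0 : g = 0 := hSOD.semiorth (show l < i from hl') (P.mem i) hY g
    rw [hg, hg0, comp_zero]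

/-- Vanishing for shifted sources. -/
lemma SODFilt.vanish' (hSOD : IsSOD A) {t : C} (P : SODFilt A t)
    (k : Fin (n + 1)) (l : Fin n) (hl : (l : ℕ) < (k : ℕ)) {Y : C} (hY : Y ∈ A l)
    (m : ℤ) (φ : (P.F k)⟦m⟧ ⟶ Y) : φ = 0 := by
  have hY' : (Y⟦-m⟧ : C) ∈ A l := (hSOD.triangSub l).shift_mem (-m) hY
  have h1 : (shiftFunctorCompIsoId C m (-m) (add_neg_cancel m)).inv.app (P.F k) ≫
      (shiftFunctor C (-m)).map φ = 0 :=
    P.vanish hSOD k l hl _ hY' _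
  have h2 : (shiftFunctor C (-m)).map φ = 0 := by
    have := congrArg (fun x => (shiftFunctorCompIsoId C m (-m) (add_neg_cancel m)).hom.app
      (P.F k) ≫ x) h1
    simpa using this
  apply (shiftFunctor C (-m)).map_injective
  rw [h2, Functor.map_zero]

/-- One step of the lifting: a map between consecutive filtration stages lifts uniquely. -/
lemma lift_step (hSOD : IsSOD A) {t t' : C} (P : SODFilt A t) (Q : SODFilt A t')
    (j : Fin n) (u : P.F j.castSucc ⟶ Q.F j.castSucc) :
    ∃! v : P.F j.succ ⟶ Q.F j.succ, P.f j ≫ u = v ≫ Q.f j := by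
  have hvan : (P.f j ≫ u) ≫ Q.g j = 0 := by
    rw [assoc]
    exact P.vanish hSOD j.succ j (by simp) _ (Q.mem j) _
  obtain ⟨v, hv⟩ : ∃ v : P.F j.succ ⟶ Q.F j.succ, P.f j ≫ u = v ≫ Q.f j :=
    Triangle.coyoneda_exact₂ _ (Q.dist j) (P.f j ≫ u) hvan
  refine ⟨v, ?_, ?_⟩
  · exact hv
  intro v' hv'
  have hd : (v' - v) ≫ Q.f j = 0 := by
    rw [Preadditive.sub_comp, ← hv', ← hv, sub_self]
  obtain ⟨g, hg⟩ : ∃ g : P.F j.succ ⟶ (Q.a j)⟦(-1 : ℤ)⟧, v' - v =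
      g ≫ (Triangle.mk (Q.f j) (Q.g j) (Q.h j)).invRotate.mor₁ :=
    Triangle.coyoneda_exact₂ _
      (inv_rot_of_distTriang _ (Q.dist j)) (v' - v) hd
  have hg0 : g = 0 :=
    P.vanish hSOD j.succ j (by simp) _ ((hSOD.triangSub j).shift_mem (-1) (Q.mem j)) g
  have : v' - v = 0 := by rw [hg, hg0]; exact zero_comp
  rw [← sub_eq_zero]; exact this

/-- Unique lifting of a morphism to a morphism of filtrations (Part 1). -/
lemma lift_family (hSOD : IsSOD A) {t t' : C} (φ : t ⟶ t')
    (P : SODFilt A t) (Q : SODFilt A t') :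
    ∃! ψ : ∀ j : Fin (n + 1), P.F j ⟶ Q.F j,
      ψ 0 = eqToHom P.base ≫ φ ≫ eqToHom Q.base.symm ∧
      ∀ j : Fin n, P.f j ≫ ψ j.castSucc = ψ j.succ ≫ Q.f j := by
  classical
  let step : ∀ (j : Fin n), (P.F j.castSucc ⟶ Q.F j.castSucc) → (P.F j.succ ⟶ Q.F j.succ) :=
    fun j u => (lift_step hSOD P Q j u).exists.choose
  have hstep : ∀ (j : Fin n) (u : P.F j.castSucc ⟶ Q.F j.castSucc),
      P.f j ≫ u = step j u ≫ Q.f j :=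
    fun j u => (lift_step hSOD P Q j u).exists.choose_spec
  refine ⟨Fin.induction (motive := fun j => (P.F j ⟶ Q.F j))
      (eqToHom P.base ≫ φ ≫ eqToHom Q.base.symm) step, ⟨rfl, ?_⟩, ?_⟩
  · intro j
    exact hstep j _
  · rintro ψ' ⟨h0, hsq⟩
    funext j
    induction j using Fin.induction with
    | zero => exact h0
    | succ i ih =>
      refine (lift_step hSOD P Q i _).unique ?_ (hstep i _)
      have h := hsq i
      rw [ih] at h
      exact h

/-- The cone morphism induced by a square of filtrations is unique (it only needs the
`g`-compatibility). -/
lemma cone_unique (hSOD : IsSOD A) {t t' : C} (P : SODFilt A t) (Q : SODFilt A t')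
    (l : Fin n) (ψc : P.F l.castSucc ⟶ Q.F l.castSucc) (c c' : P.a l ⟶ Q.a l)
    (hc : P.g l ≫ c = ψc ≫ Q.g l) (hc' : P.g l ≫ c' = ψc ≫ Q.g l) : c = c' := by
  have hd : P.g l ≫ (c - c') = 0 := by
    rw [Preadditive.comp_sub, hc, hc', sub_self]
  obtain ⟨e, he⟩ : ∃ e : (P.F l.succ)⟦(1 : ℤ)⟧ ⟶ Q.a l, c - c' = P.h l ≫ e :=
    Triangle.yoneda_exact₃ _ (P.dist l) (c - c') hd
  have he0 : e = 0 := P.vanish' hSOD l.succ l (by simp) (Q.mem l) 1 e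
  have : c - c' = 0 := by rw [he, he0, comp_zero]
  rw [← sub_eq_zero]; exact this

lemma cone_exists {t t' : C} (P : SODFilt A t) (Q : SODFilt A t') (l : Fin n)
    (ψs : P.F l.succ ⟶ Q.F l.succ) (ψc : P.F l.castSucc ⟶ Q.F l.castSucc)
    (hcomm : P.f l ≫ ψc = ψs ≫ Q.f l) :
    ∃ c : P.a l ⟶ Q.a l, P.g l ≫ c = ψc ≫ Q.g l ∧ P.h l ≫ ψs⟦1⟧' = c ≫ Q.h l :=
  complete_distinguished_triangle_morphism _ _ (P.dist l) (Q.dist l) ψs ψc hcomm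

lemma nonempty_sodFilt {t : C} (h : HasFiltration A t) : Nonempty (SODFilt A t) := by
  obtain ⟨F, f, hz, hb, hj⟩ := h
  choose a g h' hd hm using hj
  exact ⟨⟨F, f, hz, hb, a, g, h', hd, hm⟩⟩

variable (hSOD : IsSOD A)

/-- A chosen filtration for each object. -/
noncomputable def chooseFilt (t : C) : SODFilt A t :=
  (nonempty_sodFilt (hSOD.filt t)).some

/-- The unique lift of a morphism to a morphism of filtrations. -/
noncomputable def theLift {t t' : C} (φ : t ⟶ t') (P : SODFilt A t) (Q : SODFilt A t') :
    ∀ j : Fin (n + 1), P.F j ⟶ Q.F j :=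
  (lift_family hSOD φ P Q).exists.choose

lemma theLift_zero {t t' : C} (φ : t ⟶ t') (P : SODFilt A t) (Q : SODFilt A t') :
    theLift hSOD φ P Q 0 = eqToHom P.base ≫ φ ≫ eqToHom Q.base.symm :=
  (lift_family hSOD φ P Q).exists.choose_spec.1

lemma theLift_sq {t t' : C} (φ : t ⟶ t') (P : SODFilt A t) (Q : SODFilt A t') (j : Fin n) :
    P.f j ≫ theLift hSOD φ P Q j.castSucc = theLift hSOD φ P Q j.succ ≫ Q.f j :=
  (lift_family hSOD φ P Q).exists.choose_spec.2 j

lemma theLift_eq {t t' : C} (φ : t ⟶ t') (P : SODFilt A t) (Q : SODFilt A t')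
    (ψ : ∀ j : Fin (n + 1), P.F j ⟶ Q.F j)
    (h0 : ψ 0 = eqToHom P.base ≫ φ ≫ eqToHom Q.base.symm)
    (hsq : ∀ j : Fin n, P.f j ≫ ψ j.castSucc = ψ j.succ ≫ Q.f j) :
    ψ = theLift hSOD φ P Q :=
  (lift_family hSOD φ P Q).unique ⟨h0, hsq⟩
    ⟨theLift_zero hSOD φ P Q, theLift_sq hSOD φ P Q⟩

lemma theLift_id {t : C} (P : SODFilt A t) (j : Fin (n + 1)) :
    theLift hSOD (𝟙 t) P P j = 𝟙 _ :=
  (congrFun (theLift_eq hSOD (𝟙 t) P P (fun _ => 𝟙 _) (by simp) (by simp)) j).symm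

lemma theLift_comp {t t' t'' : C} (φ₁ : t ⟶ t') (φ₂ : t' ⟶ t'')
    (P : SODFilt A t) (Q : SODFilt A t') (R : SODFilt A t'') (j : Fin (n + 1)) :
    theLift hSOD φ₁ P Q j ≫ theLift hSOD φ₂ Q R j = theLift hSOD (φ₁ ≫ φ₂) P R j := by
  refine congrFun (theLift_eq hSOD (φ₁ ≫ φ₂) P R
    (fun j => theLift hSOD φ₁ P Q j ≫ theLift hSOD φ₂ Q R j) ?_ ?_) j
  · show theLift hSOD φ₁ P Q 0 ≫ theLift hSOD φ₂ Q R 0 = _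
    rw [theLift_zero, theLift_zero]
    simp
  · intro j
    show P.f j ≫ theLift hSOD φ₁ P Q j.castSucc ≫ theLift hSOD φ₂ Q R j.castSucc =
      (theLift hSOD φ₁ P Q j.succ ≫ theLift hSOD φ₂ Q R j.succ) ≫ R.f j
    rw [← assoc, theLift_sq, assoc, theLift_sq, ← assoc]

/-- The induced morphism on the `l`-th cones. -/
noncomputable def theCone {t t' : C} (φ : t ⟶ t') (P : SODFilt A t) (Q : SODFilt A t')
    (l : Fin n) : P.a l ⟶ Q.a l :=
  (cone_exists P Q l (theLift hSOD φ P Q l.succ) (theLift hSOD φ P Q l.castSucc)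
    (theLift_sq hSOD φ P Q l)).choose

lemma theCone_g {t t' : C} (φ : t ⟶ t') (P : SODFilt A t) (Q : SODFilt A t') (l : Fin n) :
    P.g l ≫ theCone hSOD φ P Q l = theLift hSOD φ P Q l.castSucc ≫ Q.g l :=
  (cone_exists P Q l (theLift hSOD φ P Q l.succ) (theLift hSOD φ P Q l.castSucc)
    (theLift_sq hSOD φ P Q l)).choose_spec.1

lemma theCone_h {t t' : C} (φ : t ⟶ t') (P : SODFilt A t) (Q : SODFilt A t') (l : Fin n) :
    P.h l ≫ (theLift hSOD φ P Q l.succ)⟦1⟧' = theCone hSOD φ P Q l ≫ Q.h l :=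
  (cone_exists P Q l (theLift hSOD φ P Q l.succ) (theLift hSOD φ P Q l.castSucc)
    (theLift_sq hSOD φ P Q l)).choose_spec.2

lemma theCone_eq {t t' : C} (φ : t ⟶ t') (P : SODFilt A t) (Q : SODFilt A t') (l : Fin n)
    (c : P.a l ⟶ Q.a l) (hc : P.g l ≫ c = theLift hSOD φ P Q l.castSucc ≫ Q.g l) :
    c = theCone hSOD φ P Q l :=
  cone_unique hSOD P Q l _ c _ hc (theCone_g hSOD φ P Q l)

lemma theCone_id {t : C} (P : SODFilt A t) (l : Fin n) :
    theCone hSOD (𝟙 t) P P l = 𝟙 _ :=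
  (theCone_eq hSOD (𝟙 t) P P l (𝟙 _) (by rw [theLift_id]; simp)).symm

lemma theCone_comp {t t' t'' : C} (φ₁ : t ⟶ t') (φ₂ : t' ⟶ t'')
    (P : SODFilt A t) (Q : SODFilt A t') (R : SODFilt A t'') (l : Fin n) :
    theCone hSOD φ₁ P Q l ≫ theCone hSOD φ₂ Q R l = theCone hSOD (φ₁ ≫ φ₂) P R l := by
  apply theCone_eq
  rw [← assoc, theCone_g, assoc, theCone_g, ← assoc, theLift_comp]

lemma theCone_id_isIso {t : C} (P Q : SODFilt A t) (l : Fin n) :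
    IsIso (theCone hSOD (𝟙 t) P Q l) := by
  refine ⟨⟨theCone hSOD (𝟙 t) Q P l, ?_, ?_⟩⟩
  · rw [theCone_comp, comp_id, theCone_id]
  · rw [theCone_comp, comp_id, theCone_id]

/-- The projection functor onto the `l`-th component. -/
noncomputable def prFunctor (l : Fin n) : C ⥤ C where
  obj t := (chooseFilt hSOD t).a l
  map {t t'} φ := theCone hSOD φ (chooseFilt hSOD t) (chooseFilt hSOD t') l
  map_id t := theCone_id hSOD (chooseFilt hSOD t) l
  map_comp {t t' t''} φ₁ φ₂ := (theCone_comp hSOD φ₁ φ₂ _ _ _ l).symm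

end Aux

/-- in a semiorthogonal decomposition `T = ⟨A 0, …, A (n-1)⟩`,
(1) every morphism `φ : t ⟶ t'` lifts uniquely to a morphism of filtrations;
(2) the filtration of an object is unique up to canonical isomorphism (the unique lift of
the identity consists of isomorphisms);
(3) for each `j`, the assignment `t ↦ a j` underlies a projection functor `pr : T ⥤ A j`,
compatible with the induced morphisms on the cones. -/
theorem statement14 {n : ℕ} (A : Fin n → Set C) (hSOD : IsSOD A) :
    (∀ (t t' : C) (φ : t ⟶ t') (P : SODFilt A t) (Q : SODFilt A t'),
      ∃! ψ : ∀ j : Fin (n + 1), P.F j ⟶ Q.F j,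
        ψ 0 = eqToHom P.base ≫ φ ≫ eqToHom Q.base.symm ∧
        ∀ j : Fin n, P.f j ≫ ψ j.castSucc = ψ j.succ ≫ Q.f j) ∧
    (∀ (t : C) (P Q : SODFilt A t) (ψ : ∀ j : Fin (n + 1), P.F j ⟶ Q.F j),
      ψ 0 = eqToHom P.base ≫ 𝟙 t ≫ eqToHom Q.base.symm →
      (∀ j : Fin n, P.f j ≫ ψ j.castSucc = ψ j.succ ≫ Q.f j) →
      ∀ j : Fin (n + 1), IsIso (ψ j)) ∧
    (∀ l : Fin n, ∃ pr : C ⥤ C,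
      (∀ t : C, pr.obj t ∈ A l) ∧
      ∃ e : ∀ (t : C) (P : SODFilt A t), pr.obj t ≅ P.a l,
        ∀ (t t' : C) (φ : t ⟶ t') (P : SODFilt A t) (Q : SODFilt A t')
          (ψ : ∀ j : Fin (n + 1), P.F j ⟶ Q.F j),
          ψ 0 = eqToHom P.base ≫ φ ≫ eqToHom Q.base.symm →
          (∀ j : Fin n, P.f j ≫ ψ j.castSucc = ψ j.succ ≫ Q.f j) →
          ∀ c : P.a l ⟶ Q.a l,
            P.g l ≫ c = ψ l.castSucc ≫ Q.g l →
            P.h l ≫ (shiftFunctor C (1 : ℤ)).map (ψ l.succ) = c ≫ Q.h l →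
            pr.map φ = (e t P).hom ≫ c ≫ (e t' Q).inv) := by
  refine ⟨fun t t' φ P Q => lift_family hSOD φ P Q, ?_, ?_⟩
  · intro t P Q ψ h0 hsq j
    have hψ : ψ = theLift hSOD (𝟙 t) P Q := theLift_eq hSOD (𝟙 t) P Q ψ h0 hsq
    rw [hψ]
    exact ⟨⟨theLift hSOD (𝟙 t) Q P j,
      by rw [theLift_comp, comp_id, theLift_id],
      by rw [theLift_comp, comp_id, theLift_id]⟩⟩
  · intro l
    refine ⟨prFunctor hSOD l, fun t => (chooseFilt hSOD t).mem l, ?_⟩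
    refine ⟨fun t P =>
      letI := theCone_id_isIso hSOD (chooseFilt hSOD t) P l
      @asIso _ _ _ _ (theCone hSOD (𝟙 t) (chooseFilt hSOD t) P l)
        (theCone_id_isIso hSOD (chooseFilt hSOD t) P l), ?_⟩
    intro t t' φ P Q ψ h0 hsq c hcg _
    have hψ : ψ = theLift hSOD φ P Q := theLift_eq hSOD φ P Q ψ h0 hsq
    have hc : c = theCone hSOD φ P Q l :=
      theCone_eq hSOD φ P Q l c (by rw [hcg, hψ])
    letI := theCone_id_isIso hSOD (chooseFilt hSOD t) P l
    letI := theCone_id_isIso hSOD (chooseFilt hSOD t') Q l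
    have key : theCone hSOD (𝟙 t) (chooseFilt hSOD t) P l ≫ theCone hSOD φ P Q l =
        theCone hSOD φ (chooseFilt hSOD t) (chooseFilt hSOD t') l ≫
          theCone hSOD (𝟙 t') (chooseFilt hSOD t') Q l := by
      rw [theCone_comp, theCone_comp, id_comp, comp_id]
    show theCone hSOD φ (chooseFilt hSOD t) (chooseFilt hSOD t') l = _
    simp only [asIso_hom, asIso_inv]
    rw [hc]
    exact (Iso.eq_comp_inv (asIso (theCone hSOD (𝟙 t') (chooseFilt hSOD t') Q l))).2 key.symm |>.trans (assoc _ _ _)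


end Statements
end HPD
end

section
/- Let T = ⟨A_0, A_1(1), …, A_{i−1}(i−1)⟩ be a Lefschetz decomposition of length i of a triangulated category T with respect to an exact autoequivalence τ. Then each component is recovered from the first one: for every 1 ≤ k ≤ i−1, A_k = ^⊥(A_0(−k)) ∩ A_{k−1} (intersection of full subcategories of T). In particular, a Lefschetz decomposition with respect to τ is completely determined by its first component A_0. -/
namespace HPD

open CategoryTheory Category Limits Pretriangulated

universe w v u

variable {C : Type u} [Category.{v} C]

section Statements

variable [HasZeroObject C] [Preadditive C] [HasShift C ℤ]
  [∀ n : ℤ, (shiftFunctor C n).Additive] [Pretriangulated C]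


section Aux

/-! Auxiliary machinery: iterated powers of an endofunctor. -/

def powC (E : C ⥤ C) : ℕ → C ⥤ C
  | 0 => 𝟭 C
  | m + 1 => E ⋙ powC E m

lemma powC_obj_iterate (E : C ⥤ C) : ∀ (m : ℕ) (X : C),
    (powC E m).obj X = (fun Y => E.obj Y)^[m] X
  | 0, _ => rfl
  | m + 1, X => powC_obj_iterate E m (E.obj X)

lemma powC_obj_add (E : C ⥤ C) : ∀ (b a : ℕ) (X : C),
    (powC E (a + b)).obj X = (powC E a).obj ((powC E b).obj X)
  | 0, _, _ => rfl
  | b + 1, a, X => powC_obj_add E b a (E.obj X)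

def powComm (E : C ⥤ C) : ∀ m : ℕ, powC E m ⋙ E ≅ E ⋙ powC E m
  | 0 => Functor.leftUnitor E ≪≫ (Functor.rightUnitor E).symm
  | m + 1 => Functor.associator E (powC E m) E ≪≫ Functor.isoWhiskerLeft E (powComm E m)

def powAdj (τ : C ≌ C) : ∀ m : ℕ, powC τ.functor m ⊣ powC τ.inverse m
  | 0 => Adjunction.id
  | m + 1 => (τ.toAdjunction.comp (powAdj τ m)).ofNatIsoRight (powComm τ.inverse m)

lemma powC_isEquivalence (E : C ⥤ C) [E.IsEquivalence] : ∀ m, (powC E m).IsEquivalence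
  | 0 => (inferInstance : (𝟭 C).IsEquivalence)
  | m + 1 => by
      haveI := powC_isEquivalence E m
      exact (inferInstance : (E ⋙ powC E m).IsEquivalence)

lemma eq_zero_of_equiv [Preadditive C] {X Y X' Y' : C} (e : (X ⟶ Y) ≃ (X' ⟶ Y'))
    (hzero : ∀ ψ : X ⟶ Y, ψ = 0) (φ : X' ⟶ Y') : φ = 0 :=
  e.symm.injective (by rw [hzero (e.symm φ), hzero (e.symm 0)])

section AuxTriang

variable [HasZeroObject C] [Preadditive C] [HasShift C ℤ]
  [∀ n : ℤ, (shiftFunctor C n).Additive] [Pretriangulated C]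

lemma twistFun_natCast (τ : C ≌ C) (r : ℕ) (X : C) :
    twistFun τ ((r : ℕ) : ℤ) X = (powC τ.functor r).obj X :=
  (powC_obj_iterate τ.functor r X).symm

lemma twistFun_neg_natCast (τ : C ≌ C) (k : ℕ) (X : C) :
    twistFun τ (-((k + 1 : ℕ) : ℤ)) X = (powC τ.inverse (k + 1)).obj X :=
  (powC_obj_iterate τ.inverse (k + 1) X).symm

/-- Key dévissage lemma: if an object has a filtration with respect to a family of
subcategories, receives no nonzero maps from the high-indexed subcategories and admits no
nonzero maps to the low-indexed ones, then its identity vanishes. -/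
lemma id_eq_zero_of_filtration {n : ℕ} (B : Fin n → Set C) (y : C) (m : ℕ)
    (hfilt : HasFiltration B y)
    (hlow : ∀ j : Fin n, (j : ℕ) < m → ∀ a ∈ B j, ∀ ψ : y ⟶ a, ψ = 0)
    (hhigh : ∀ j : Fin n, m ≤ (j : ℕ) → ∀ a ∈ B j, ∀ ψ : a ⟶ y, ψ = 0)
    (hm : m ≤ n) :
    𝟙 y = 0 := by
  obtain ⟨F, f, hz, h0, htri⟩ := hfilt
  subst h0
  choose aa gg hh hdist hmem using htri
  have down : ∀ j : Fin (n + 1), m ≤ (j : ℕ) → ∀ φ : F j ⟶ F 0, φ = 0 := by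
    refine Fin.reverseInduction ?_ ?_
    · intro _ φ
      exact hz.eq_of_src φ 0
    · intro j ih hj φ
      have h1 : f j ≫ φ = 0 := by
        refine ih ?_ _
        simp only [Fin.coe_castSucc] at hj
        simp only [Fin.val_succ]
        omega
      obtain ⟨ψ, hψ⟩ := Triangle.yoneda_exact₂ _ (hdist j) φ h1
      rw [hψ, show ψ = 0 from hhigh j (by simpa using hj) (aa j) (hmem j) ψ, comp_zero]; rfl
  have up : ∀ j : Fin (n + 1), (j : ℕ) ≤ m →
      ∃ (χ : F 0 ⟶ F j) (ρ : F j ⟶ F 0), χ ≫ ρ = 𝟙 (F 0) := by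
    refine Fin.induction ?_ ?_
    · intro _
      exact ⟨𝟙 _, 𝟙 _, by simp⟩
    · intro j ih hj
      obtain ⟨χ, ρ, hχρ⟩ := ih (by
        simp only [Fin.val_succ] at hj
        simp only [Fin.coe_castSucc]
        omega)
      have h2 : χ ≫ gg j = 0 :=
        hlow j (by simp only [Fin.val_succ] at hj; omega) (aa j) (hmem j) (χ ≫ gg j)
      obtain ⟨χ', hχ'⟩ := Triangle.coyoneda_exact₂ _ (hdist j) χ h2
      exact ⟨χ', f j ≫ ρ, by rw [hχ'] at hχρ; simp only [Triangle.mk_mor₁] at hχρ; exact (assoc _ _ _).symm.trans hχρ⟩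
  obtain ⟨χ, ρ, hχρ⟩ := up ⟨m, by omega⟩ (le_refl m)
  rw [down ⟨m, by omega⟩ (le_refl m) ρ, comp_zero] at hχρ
  exact hχρ.symm

/-- **Statement 15, first half**, as a standalone lemma. -/
lemma lefschetz_component_eq (τ : C ≌ C) (i : ℕ) (A : ℕ → Set C)
    (hL : IsLefschetz τ i A) (m : ℕ) (hm1 : 1 ≤ m) (hm2 : m ≤ i - 1) :
    A m = leftOrth (twistSet τ (-(m : ℤ)) (A 0)) ∩ A (m - 1) := by
  obtain ⟨k, rfl⟩ : ∃ k, m = k + 1 := ⟨m - 1, by omega⟩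
  simp only [Nat.add_sub_cancel]
  have hi : 0 < i := hL.pos
  have hmi : k + 1 < i := by omega
  haveI : τ.functor.IsEquivalence := inferInstance
  haveI := powC_isEquivalence τ.functor (k + 1)
  -- descending chain
  have chain0 : ∀ (d j : ℕ), j + d < i → A (j + d) ⊆ A j := by
    intro d
    induction d with
    | zero => intro j _ x hx; exact hx
    | succ e ih =>
        intro j hj x hx
        exact ih j (by omega) (hL.desc (j + e) (by omega) hx)
  have chain : ∀ (j l : ℕ), j ≤ l → l < i → A l ⊆ A j := by
    intro j l hjl hli
    obtain ⟨d, rfl⟩ := Nat.le.dest hjl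
    exact chain0 d j hli
  -- semiorthogonality vanishing
  have semivan : ∀ r : ℕ, 0 < r → r < i → ∀ x ∈ A r, ∀ z ∈ A 0,
      ∀ ψ : (powC τ.functor r).obj x ⟶ z, ψ = 0 := by
    intro r hr0 hri x hx z hz ψ
    have hlt : (⟨0, hi⟩ : Fin i) < ⟨r, hri⟩ := by simpa [Fin.lt_def] using hr0
    exact hL.sod.semiorth hlt
      ⟨x, hx, ⟨eqToIso (twistFun_natCast τ r x)⟩⟩
      ⟨z, hz, ⟨eqToIso (twistFun_natCast τ 0 z)⟩⟩ ψ
  -- A m ⊆ ^⊥(A 0 (-m))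
  have hsub : A (k + 1) ⊆ leftOrth (twistSet τ (-((k + 1 : ℕ) : ℤ)) (A 0)) := by
    intro x hx Y hY ff
    obtain ⟨X, hX, ⟨e⟩⟩ := hY
    have hzero : ∀ ψ : (powC τ.functor (k + 1)).obj x ⟶ X, ψ = 0 :=
      fun ψ => semivan (k + 1) (by omega) hmi x hx X hX ψ
    exact eq_zero_of_equiv
      (((powAdj τ (k + 1)).homEquiv x X).trans
        (Iso.homCongr (Iso.refl x)
          ((eqToIso (twistFun_neg_natCast τ k X)).symm ≪≫ e))) hzero ff
  apply Set.Subset.antisymm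
  · intro x hx
    exact ⟨hsub hx, chain k (k + 1) (by omega) hmi hx⟩
  · rintro t ⟨ht1, ht2⟩
    obtain ⟨hTri, hAdm⟩ := hL.adm (k + 1) hmi
    obtain ⟨R, ⟨adj⟩⟩ := hAdm.2.exists_rightAdjoint
    set ι := ObjectProperty.ι (· ∈ A (k + 1)) with hι
    set a : C := ι.obj (R.obj t) with haa
    have ha : a ∈ A (k + 1) := (R.obj t).property
    set ε : a ⟶ t := adj.counit.app t with hε
    obtain ⟨b, g, h, hT⟩ := distinguished_cocone_triangle ε
    -- bijectivity of composition with the counit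
    have hbij : ∀ (w' : ObjectProperty.FullSubcategory (· ∈ A (k + 1))),
        Function.Bijective (fun χ : (ι.obj w' ⟶ a) => χ ≫ ε) := by
      intro w'
      have hcomp : (fun χ : (ι.obj w' ⟶ a) => χ ≫ ε) ∘
          (fun ψ : (w' ⟶ R.obj t) => ι.map ψ) =
          fun ψ => (adj.homEquiv w' t).symm ψ := by
        funext ψ
        show ι.map ψ ≫ ε = _
        rw [hε, Adjunction.homEquiv_counit]
      have hmapbij : Function.Bijective (fun ψ : (w' ⟶ R.obj t) => ι.map ψ) :=
        ⟨fun _ _ hh => ι.map_injective hh, fun χ => ι.map_surjective χ⟩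
      have hcb : Function.Bijective ((fun χ : (ι.obj w' ⟶ a) => χ ≫ ε) ∘
          (fun ψ : (w' ⟶ R.obj t) => ι.map ψ)) := by
        rw [hcomp]
        exact (adj.homEquiv w' t).symm.bijective
      exact (Function.Bijective.of_comp_iff _ hmapbij).mp hcb
    -- claim 1 : Hom(A (k+1), b) = 0
    have hc1 : ∀ w ∈ A (k + 1), ∀ φ : w ⟶ b, φ = 0 := by
      intro w hw φ
      have h31 : h ≫ (shiftFunctor C (1 : ℤ)).map ε = 0 :=
        comp_distTriang_mor_zero₃₁ _ hT
      have hχε : (φ ≫ h) ≫ (shiftFunctor C (1 : ℤ)).map ε = 0 := by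
        rw [assoc, h31, comp_zero]
      set ν := shiftFunctorCompIsoId C (1 : ℤ) (-1) (by omega) with hν
      set χ' := (shiftFunctor C (-1 : ℤ)).map (φ ≫ h) ≫ ν.hom.app a with hχ'
      have hnat : (shiftFunctor C (-1 : ℤ)).map ((shiftFunctor C (1:ℤ)).map ε) ≫ ν.hom.app t
          = ν.hom.app a ≫ ε := ν.hom.naturality ε
      have hχ'ε : χ' ≫ ε = 0 := by
        rw [hχ', assoc, ← hnat, ← assoc, ← Functor.map_comp, hχε,
          Functor.map_zero, zero_comp]
      have hw' : (w⟦(-1 : ℤ)⟧ : C) ∈ A (k + 1) := hTri.shift_mem (-1) hw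
      have hχ'0 : χ' = 0 := by
        have hb := hbij ⟨w⟦(-1 : ℤ)⟧, hw'⟩
        apply hb.injective
        simpa using hχ'ε
      have hmapχ : (shiftFunctor C (-1 : ℤ)).map (φ ≫ h) = 0 := by
        rw [← cancel_mono (ν.hom.app a), ← hχ', hχ'0, zero_comp]
      have hχ0 : φ ≫ h = 0 :=
        (shiftFunctor C (-1 : ℤ)).map_injective
          (by rw [hmapχ, Functor.map_zero])
      obtain ⟨ψ, hψ⟩ := Triangle.coyoneda_exact₃ _ hT φ hχ0
      obtain ⟨ψ', hψ'⟩ := (hbij ⟨w, hw⟩).surjective ψ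
      have hεg : ε ≫ g = 0 := comp_distTriang_mor_zero₁₂ _ hT
      rw [hψ, ← hψ']
      show (ψ' ≫ ε) ≫ g = 0
      rw [assoc, hεg, comp_zero]
    -- claim 2 : Hom(b, A 0 (-m)) = 0
    have hc2 : ∀ z ∈ twistSet τ (-((k + 1 : ℕ) : ℤ)) (A 0), ∀ φ : b ⟶ z, φ = 0 := by
      intro z hz φ
      obtain ⟨ψ, hψ⟩ := Triangle.yoneda_exact₃ _ hT φ (ht1 hz (g ≫ φ))
      have : ψ = 0 := hsub (hTri.shift_mem 1 ha) hz ψ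
      rw [hψ, this, comp_zero]; rfl
    -- b lies in A k
    have hbm1 : b ∈ A k :=
      (hL.adm k (by omega)).1.cone_mem _ hT (chain k (k + 1) (by omega) hmi ha) ht2
    -- the object y = τ^m b and its filtration
    set y : C := (powC τ.functor (k + 1)).obj b with hy
    have hlow : ∀ j : Fin i, (j : ℕ) < k + 1 →
        ∀ a' ∈ twistSet τ (((j : ℕ) : ℕ) : ℤ) (A (j : ℕ)), ∀ ψ : y ⟶ a', ψ = 0 := by
      intro j hj a' ha' ψ
      rcases Nat.eq_zero_or_pos (j : ℕ) with h0 | hpos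
      · -- j = 0 : use claim 2 through the adjunction
        rw [h0] at ha'
        obtain ⟨x, hx, ⟨e⟩⟩ := ha'
        have hzero : ∀ χ : b ⟶ (powC τ.inverse (k + 1)).obj x, χ = 0 := by
          intro χ
          exact hc2 _ ⟨x, hx, ⟨eqToIso (twistFun_neg_natCast τ k x)⟩⟩ χ
        refine eq_zero_of_equiv
          ((((powAdj τ (k + 1)).homEquiv b x).symm).trans
            (Iso.homCongr (Iso.refl y)
              ((eqToIso (twistFun_natCast τ 0 x)).symm ≪≫ e))) hzero ψ
      · -- 1 ≤ j < k+1
        obtain ⟨x, hx, ⟨e⟩⟩ := ha'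
        obtain ⟨r, hr⟩ := Nat.le.dest (Nat.le_of_lt hj)
        have hr1 : 1 ≤ r := by omega
        have hzero : ∀ χ : (powC τ.functor r).obj b ⟶ x, χ = 0 := by
          intro χ
          exact semivan r (by omega) (by omega) b
            (chain r k (by omega) (by omega) hbm1) x
            (chain 0 (j : ℕ) (by omega) j.isLt hx) χ
        haveI := powC_isEquivalence τ.functor (j : ℕ)
        refine eq_zero_of_equiv
          (((Functor.FullyFaithful.ofFullyFaithful (powC τ.functor (j : ℕ))).homEquiv).trans
            (Iso.homCongr (eqToIso ?_) ((eqToIso (twistFun_natCast τ (j : ℕ) x)).symm ≪≫ e)))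
          hzero ψ
        rw [← powC_obj_add, hr]
    have hhigh : ∀ j : Fin i, k + 1 ≤ (j : ℕ) →
        ∀ a' ∈ twistSet τ (((j : ℕ) : ℕ) : ℤ) (A (j : ℕ)), ∀ ψ : a' ⟶ y, ψ = 0 := by
      intro j hj a' ha' ψ
      obtain ⟨x, hx, ⟨e⟩⟩ := ha'
      obtain ⟨s, hs⟩ := Nat.le.dest hj
      have hzero : ∀ χ : (powC τ.functor s).obj x ⟶ b, χ = 0 := by
        rcases Nat.eq_zero_or_pos s with h0 | hpos
        · subst h0
          intro χ
          exact hc1 x (chain (k + 1) (j : ℕ) hj j.isLt hx) χ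
        · intro χ
          exact semivan s hpos (by omega) x
            (chain s (j : ℕ) (by omega) j.isLt hx) b
            (chain 0 k (by omega) (by omega) hbm1) χ
      refine eq_zero_of_equiv
        (((Functor.FullyFaithful.ofFullyFaithful (powC τ.functor (k + 1))).homEquiv).trans
          (Iso.homCongr (((eqToIso (by rw [← powC_obj_add, hs])).symm ≪≫
            ((eqToIso (twistFun_natCast τ (j : ℕ) x)).symm ≪≫ e))) (Iso.refl y)))
        hzero ψ
    have hkey : 𝟙 y = 0 :=
      id_eq_zero_of_filtration _ y (k + 1) (hL.sod.filt y) hlow hhigh (by omega)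
    -- transfer back : 𝟙 b = 0
    have hb0 : 𝟙 b = 0 := by
      refine eq_zero_of_equiv
        (((Functor.FullyFaithful.ofFullyFaithful (powC τ.functor (k + 1))).homEquiv
          (X := b) (Y := b)).symm) ?_ (𝟙 b)
      intro ψ
      rw [← comp_id ψ]
      show ψ ≫ 𝟙 y = 0
      rw [hkey, comp_zero]
    have hbz : IsZero b := by
      rw [IsZero.iff_id_eq_zero]
      exact hb0
    -- conclude via the inverse rotation
    have hbz' : IsZero ((b⟦(-1 : ℤ)⟧ : C)) := by
      rw [IsZero.iff_id_eq_zero]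
      rw [← (shiftFunctor C (-1 : ℤ)).map_id, hb0, Functor.map_zero]
    have := hTri.cone_mem _ (inv_rot_of_distTriang _ hT) (hTri.zero_mem hbz') ha
    exact this

end AuxTriang

end Aux

/-- in a Lefschetz decomposition
`T = ⟨A 0, (A 1)(1), …, (A (i-1))(i-1)⟩` with respect to `τ`, each component is recovered
from the first: for `1 ≤ m ≤ i - 1`, `A m = ^⊥((A 0)(-m)) ∩ A (m-1)`.  In particular a
Lefschetz decomposition with respect to `τ` is completely determined by its first
component `A 0`. -/
theorem statement15 (τ : C ≌ C) [τ.functor.CommShift ℤ] [τ.functor.IsTriangulated]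
    (i : ℕ) (A : ℕ → Set C) (hL : IsLefschetz τ i A) :
    (∀ m : ℕ, 1 ≤ m → m ≤ i - 1 →
      A m = leftOrth (twistSet τ (-(m : ℤ)) (A 0)) ∩ A (m - 1)) ∧
    (∀ A' : ℕ → Set C, IsLefschetz τ i A' → A 0 = A' 0 →
      ∀ m : ℕ, m < i → A m = A' m) := by
  have hi : 0 < i := hL.pos
  refine ⟨fun m hm1 hm2 => lefschetz_component_eq τ i A hL m hm1 hm2, ?_⟩
  intro A' hL' h0 m
  induction m with
  | zero => intro _; exact h0
  | succ k ih =>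
      intro hmi
      have e1 := lefschetz_component_eq τ i A hL (k + 1) (by omega) (by omega)
      have e2 := lefschetz_component_eq τ i A' hL' (k + 1) (by omega) (by omega)
      simp only [Nat.add_sub_cancel] at e1 e2
      rw [e1, e2, h0, ih (by omega)]

end Statements
end HPD
end
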